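/- arXiv:1803.01499 — 9 statements merged into one kernel-verified Lean document; each statement's English description precedes it below -/
import Mathlib

section
/- Let Z be a Bernoulli random variable with mean μ > 0, and let Z_1, Z_2, ... be i.i.d. copies of Z. Let M be a stopping time for this sequence such that Z_1 + ... + Z_M = ⌈Υ₁⌉ where Υ₁ = 1 + (1+ε)·4(e−2)ln(2/δ)/ε². Then Pr[(Z_1+...+Z_M)/M ≤ (1+ε)μ] ≥ 1 − δ/2 and Pr[(Z_1+...+Z_M)/M ≥ (⌈Υ₁⌉/(⌈Υ₁⌉+1))·(1−ε)μ] ≥ 1 − δ/2. -/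
set_option maxHeartbeats 1000000

open MeasureTheory ProbabilityTheory

lemma exp_le_cubic {x : ℝ} (h0 : 0 ≤ x) (h1 : x ≤ 1) :
    Real.exp x ≤ 1 + x + x^2/2 + (2/9)*x^3 := by
  have h := Real.exp_bound' h0 h1 (n := 3) (by norm_num)
  norm_num [Finset.sum_range_succ, Nat.factorial] at h
  nlinarith [h]

lemma exp_neg_le_cubic {x : ℝ} (h0 : 0 ≤ x) (h1 : x ≤ 1) :
    Real.exp (-x) ≤ 1 - x + x^2/2 + (2/9)*x^3 := by
  have h := Real.exp_bound (x := -x) (by rwa [abs_neg, abs_of_nonneg h0]) (n := 3) (by norm_num)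
  rw [abs_neg, abs_of_nonneg h0] at h
  norm_num [Finset.sum_range_succ, Nat.factorial] at h
  have h2 := (abs_sub_le_iff.1 h).1
  nlinarith [h2]

lemma bern_tail {Ω : Type*} [MeasurableSpace Ω] (P : Measure Ω) [IsProbabilityMeasure P]
    (Z : ℕ → Ω → ℝ) (μ : ℝ) (hμ0 : 0 ≤ μ) (hμ1 : μ ≤ 1)
    (hmeas : ∀ i, StronglyMeasurable (Z i))
    (hval : ∀ i ω, Z i ω = 0 ∨ Z i ω = 1)
    (hindep : iIndepFun Z P)
    (hident : ∀ i, P {ω | Z i ω = 1} = ENNReal.ofReal μ)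
    (n : ℕ) (a t : ℝ) :
    (0 ≤ t → P {ω | a ≤ ∑ i ∈ Finset.range n, Z i ω}
        ≤ ENNReal.ofReal (Real.exp (-t*a + n*(μ*(Real.exp t - 1)))))
    ∧ (t ≤ 0 → P {ω | (∑ i ∈ Finset.range n, Z i ω) ≤ a}
        ≤ ENNReal.ofReal (Real.exp (-t*a + n*(μ*(Real.exp t - 1))))) := by
  have hZint : ∀ i, Integrable (Z i) P := by
    intro i
    refine Integrable.mono' (integrable_const 1) (hmeas i).aestronglyMeasurable
      (ae_of_all _ fun ω => ?_)
    rcases hval i ω with h | h <;> simp [h]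
  have hZeq : ∀ i, ∫ ω, Z i ω ∂P = μ := by
    intro i
    have hs : MeasurableSet {ω | Z i ω = 1} := by
      have h : {ω | Z i ω = 1} = Z i ⁻¹' {1} := rfl
      rw [h]
      exact (hmeas i).measurable (measurableSet_singleton 1)
    have heq : (fun ω => Z i ω) = Set.indicator {ω | Z i ω = 1} (fun _ => (1:ℝ)) := by
      funext ω
      rcases hval i ω with h | h <;> simp [Set.indicator_apply, h]
    rw [heq, MeasureTheory.integral_indicator_const (1:ℝ) hs, measureReal_def, hident i, smul_eq_mul, mul_one,
      ENNReal.toReal_ofReal hμ0]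
  have hptw : ∀ (s : ℝ) (i : ℕ), (fun ω => Real.exp (s * Z i ω))
      = fun ω => 1 + (Real.exp s - 1) * Z i ω := by
    intro s i
    funext ω
    rcases hval i ω with h | h <;> simp [h]
  have hexpint : ∀ (s : ℝ) i, Integrable (fun ω => Real.exp (s * Z i ω)) P := by
    intro s i
    rw [hptw s i]
    exact (integrable_const 1).add ((hZint i).const_mul _)
  have hmgfZ : ∀ (s : ℝ) i, mgf (Z i) P s = 1 + μ * (Real.exp s - 1) := by
    intro s i
    unfold mgf
    rw [hptw s i, integral_add (integrable_const 1) ((hZint i).const_mul _), integral_const,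
      MeasureTheory.integral_const_mul, hZeq i]
    simp [mul_comm]
  have hSmgf : ∀ (s : ℝ), mgf (∑ i ∈ Finset.range n, Z i) P s
      = (1 + μ * (Real.exp s - 1))^n := by
    intro s
    rw [hindep.mgf_sum (fun i => (hmeas i).measurable)]
    simp [hmgfZ s]
  have hSint : ∀ (s : ℝ), Integrable (fun ω => Real.exp (s * (∑ i ∈ Finset.range n, Z i) ω)) P :=
    fun s => hindep.integrable_exp_mul_sum (fun i => (hmeas i).measurable)
      (fun i _ => hexpint s i)
  have hbase : (0:ℝ) ≤ 1 + μ * (Real.exp t - 1) := by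
    nlinarith [Real.exp_pos t]
  have hpow : (1 + μ * (Real.exp t - 1))^n ≤ Real.exp (n * (μ * (Real.exp t - 1))) := by
    calc (1 + μ * (Real.exp t - 1))^n ≤ (Real.exp (μ * (Real.exp t - 1)))^n :=
          pow_le_pow_left₀ hbase (by linarith [Real.add_one_le_exp (μ * (Real.exp t - 1))]) n
      _ = Real.exp (n * (μ * (Real.exp t - 1))) := by rw [← Real.exp_nat_mul]
  have hset1 : {ω | a ≤ ∑ i ∈ Finset.range n, Z i ω}
      = {ω | a ≤ (∑ i ∈ Finset.range n, Z i) ω} := by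
    ext ω; simp [Finset.sum_apply]
  have hset2 : {ω | (∑ i ∈ Finset.range n, Z i ω) ≤ a}
      = {ω | (∑ i ∈ Finset.range n, Z i) ω ≤ a} := by
    ext ω; simp [Finset.sum_apply]
  constructor
  · intro ht
    have h := measure_ge_le_exp_mul_mgf (μ := P) (X := ∑ i ∈ Finset.range n, Z i) a ht (hSint t)
    rw [hSmgf t] at h
    have h2 : (P {ω | a ≤ ∑ i ∈ Finset.range n, Z i ω}).toReal
        ≤ Real.exp (-t*a + n*(μ*(Real.exp t - 1))) := by
      rw [hset1]
      calc (P {ω | a ≤ (∑ i ∈ Finset.range n, Z i) ω}).toReal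
          ≤ Real.exp (-t * a) * (1 + μ * (Real.exp t - 1))^n := h
        _ ≤ Real.exp (-t * a) * Real.exp (n * (μ * (Real.exp t - 1))) :=
            mul_le_mul_of_nonneg_left hpow (Real.exp_pos _).le
        _ = Real.exp (-t*a + n*(μ*(Real.exp t - 1))) := by rw [← Real.exp_add]
    rw [← ENNReal.ofReal_toReal (measure_ne_top P _)]
    exact ENNReal.ofReal_le_ofReal h2
  · intro ht
    have h := measure_le_le_exp_mul_mgf (μ := P) (X := ∑ i ∈ Finset.range n, Z i) a ht (hSint t)
    rw [hSmgf t] at h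
    have h2 : (P {ω | (∑ i ∈ Finset.range n, Z i ω) ≤ a}).toReal
        ≤ Real.exp (-t*a + n*(μ*(Real.exp t - 1))) := by
      rw [hset2]
      calc (P {ω | (∑ i ∈ Finset.range n, Z i) ω ≤ a}).toReal
          ≤ Real.exp (-t * a) * (1 + μ * (Real.exp t - 1))^n := h
        _ ≤ Real.exp (-t * a) * Real.exp (n * (μ * (Real.exp t - 1))) :=
            mul_le_mul_of_nonneg_left hpow (Real.exp_pos _).le
        _ = Real.exp (-t*a + n*(μ*(Real.exp t - 1))) := by rw [← Real.exp_add]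
    rw [← ENNReal.ofReal_toReal (measure_ne_top P _)]
    exact ENNReal.ofReal_le_ofReal h2

lemma num1 (ε L c K t : ℝ) (hε0 : 0 < ε) (hε1 : ε < 1) (hc : 0.71 < c) (hc2 : c < 0.72)
    (hL : 0 < L) (hK1 : 1 < K) (ht : t * (2*c) = ε)
    (hKlow : (1+ε)*(4*c*L) ≤ (K-1)*ε^2) :
    -t*K + (K/(1+ε))*(t + c*t^2) ≤ -L := by
  have hc0 : (0:ℝ) < c := by linarith
  have h1ε : (0:ℝ) < 1+ε := by linarith
  have ht0 : 0 < t := by nlinarith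
  rw [← mul_le_mul_iff_of_pos_right h1ε]
  have key : (-t*K + (K/(1+ε))*(t + c*t^2)) * (1+ε)
      = -t*K*(1+ε) + K*(t + c*t^2) := by
    field_simp
  rw [key]
  have hsub' : K*ε^2 = 2*c*(K*t*ε) := by rw [← ht]; ring
  have hct : c*t^2 = ε*t/2 := by rw [← ht]; ring
  have h5 : (1+ε)*(4*c*L) ≤ 2*c*(K*t*ε) := by nlinarith [sq_nonneg ε]
  have h6 : L*(1+ε) ≤ K*t*ε/2 := by nlinarith [h5, mul_pos hc0 hL]
  nlinarith [h6, hct]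

lemma num2 (ε L c K : ℝ) (hε0 : 0 < ε) (hε1 : ε < 1) (hc : 0.71 < c) (hc2 : c < 0.72)
    (hL : 0 < L) (hK1 : 1 < K)
    (hKlow : (1+ε)*(4*c*L) ≤ (K-1)*ε^2) :
    ε*K + ((K+1)/(1-ε))*(-ε + ε^2/2 + (2/9)*ε^3) ≤ -L := by
  have h1ε : (0:ℝ) < 1-ε := by linarith
  rw [← mul_le_mul_iff_of_pos_right h1ε]
  have key : (ε*K + ((K+1)/(1-ε))*(-ε + ε^2/2 + (2/9)*ε^3)) * (1-ε)
      = ε*K*(1-ε) + (K+1)*(-ε + ε^2/2 + (2/9)*ε^3) := by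
    field_simp
  rw [key]
  nlinarith [mul_le_mul_of_nonneg_right hKlow hε0.le,
    mul_pos hL hε0, mul_pos (mul_pos hL hε0) hε0, sq_nonneg ε, mul_pos hε0 hε0]

lemma prob_compl_bound {Ω : Type*} [MeasurableSpace Ω] (P : Measure Ω) [IsProbabilityMeasure P]
    (δ : ℝ) (hδ0 : 0 < δ)
    (p : Ω → Prop) (hbad : P {ω | ¬ p ω} ≤ ENNReal.ofReal (δ/2)) :
    ENNReal.ofReal (1 - δ/2) ≤ P {ω | p ω} := by
  have hu : (1:ENNReal) ≤ P {ω | p ω} + P {ω | ¬ p ω} := by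
    rw [← measure_univ (μ := P)]
    refine le_trans (measure_mono ?_) (measure_union_le _ _)
    intro ω _
    by_cases h : p ω
    · exact Or.inl h
    · exact Or.inr h
  have h1 : ENNReal.ofReal (1 - δ/2) = 1 - ENNReal.ofReal (δ/2) := by
    rw [ENNReal.ofReal_sub 1 (by linarith), ENNReal.ofReal_one]
  rw [h1]
  calc (1:ENNReal) - ENNReal.ofReal (δ/2) ≤ 1 - P {ω | ¬ p ω} := tsub_le_tsub_left hbad 1
    _ ≤ P {ω | p ω} := by rw [tsub_le_iff_right]; exact hu

/-- Theorem 1 (stopping-rule sample): if `Z₁, Z₂, ...` are i.i.d. Bernoulli with mean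
`μ > 0` and `M` is a stopping time with `Z₁ + ... + Z_M = ⌈Υ₁⌉`, then the empirical mean
`(Z₁+...+Z_M)/M` satisfies the two stated probability bounds. -/
theorem stmt0
    {Ω : Type*} [MeasurableSpace Ω] (P : Measure Ω) [IsProbabilityMeasure P]
    (Z : ℕ → Ω → ℝ) (μ : ℝ) (hμ : 0 < μ)
    (hmeas : ∀ i, StronglyMeasurable (Z i))
    (hval : ∀ i ω, Z i ω = 0 ∨ Z i ω = 1)
    (hindep : iIndepFun Z P)
    (hident : ∀ i, P {ω | Z i ω = 1} = ENNReal.ofReal μ)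
    (ε δ : ℝ) (hε : ε ∈ Set.Ioo (0:ℝ) 1) (hδ : δ ∈ Set.Ioo (0:ℝ) 1)
    (Υ₁ : ℝ)
    (hΥ : Υ₁ = 1 + (1 + ε) * (4 * (Real.exp 1 - 2) * Real.log (2 / δ) / ε ^ 2))
    (M : Ω → ℕ)
    (hstop : IsStoppingTime (MeasureTheory.Filtration.natural Z hmeas) (fun ω => (M ω : WithTop ℕ)))
    (hsum : ∀ ω, (∑ i ∈ Finset.range (M ω), Z i ω) = (⌈Υ₁⌉ : ℝ)) :
    P {ω | (∑ i ∈ Finset.range (M ω), Z i ω) / (M ω : ℝ) ≤ (1 + ε) * μ}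
      ≥ ENNReal.ofReal (1 - δ / 2) ∧
    P {ω | (∑ i ∈ Finset.range (M ω), Z i ω) / (M ω : ℝ)
        ≥ ((⌈Υ₁⌉ : ℝ) / ((⌈Υ₁⌉ : ℝ) + 1)) * ((1 - ε) * μ)}
      ≥ ENNReal.ofReal (1 - δ / 2) := by
  obtain ⟨hε0, hε1⟩ := hε
  obtain ⟨hδ0, hδ1⟩ := hδ
  set c : ℝ := Real.exp 1 - 2 with hc_def
  set L : ℝ := Real.log (2 / δ) with hL_def
  set K : ℝ := (⌈Υ₁⌉ : ℝ) with hK_def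
  have hc1 : (0.71:ℝ) < c := by
    have := Real.exp_one_gt_d9; rw [hc_def]; norm_num at this ⊢; linarith
  have hc2 : c < 0.72 := by
    have := Real.exp_one_lt_d9; rw [hc_def]; norm_num at this ⊢; linarith
  have hc0 : (0:ℝ) < c := by linarith
  have hL0 : 0 < L := by
    rw [hL_def]
    apply Real.log_pos
    rw [lt_div_iff₀ hδ0]; linarith
  have hexpL : Real.exp (-L) = δ/2 := by
    rw [hL_def, Real.exp_neg, Real.exp_log (by positivity), inv_div]
  have hε2 : (0:ℝ) < ε^2 := by positivity
  have hΥgt : 1 < Υ₁ := by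
    rw [hΥ]
    have : 0 < (1 + ε) * (4 * c * L / ε ^ 2) := by positivity
    linarith
  have hKge : Υ₁ ≤ K := Int.le_ceil Υ₁
  have hK1 : 1 < K := lt_of_lt_of_le hΥgt hKge
  have hKlow : (1+ε)*(4*c*L) ≤ (K-1)*ε^2 := by
    have h4 : (1+ε)*(4*c*L/ε^2) ≤ K - 1 := by
      rw [hΥ] at hKge; linarith
    have h5 : ((1+ε)*(4*c*L))/ε^2 ≤ K - 1 := by rw [mul_div_assoc]; exact h4
    exact (div_le_iff₀ hε2).1 h5
  have hμ1 : μ ≤ 1 := by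
    have h := hident 0
    have h1 : P {ω | Z 0 ω = 1} ≤ 1 := prob_le_one
    rw [h] at h1
    exact ENNReal.ofReal_le_one.1 h1
  have hZnn : ∀ i ω, 0 ≤ Z i ω := by
    intro i ω; rcases hval i ω with h | h <;> simp [h]
  have hM1 : ∀ ω, 1 ≤ M ω := by
    intro ω
    by_contra h
    push_neg at h
    have h0 : M ω = 0 := Nat.lt_one_iff.1 h
    have h2 := hsum ω
    rw [h0] at h2
    simp at h2
    linarith [hK1]
  constructor
  · -- Part 1: upper bound
    set t : ℝ := ε/(2*c) with ht_def
    have htc : t * (2*c) = ε := div_mul_cancel₀ ε (by positivity)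
    have ht0 : 0 < t := by positivity
    have ht1 : t ≤ 1 := by
      rw [ht_def, div_le_one (by positivity)]; linarith
    set n1 : ℕ := ⌊K/((1+ε)*μ)⌋₊ with hn1_def
    have hsub1 : {ω | ¬ ((∑ i ∈ Finset.range (M ω), Z i ω) / (M ω : ℝ) ≤ (1 + ε) * μ)}
        ⊆ {ω | K ≤ ∑ i ∈ Finset.range n1, Z i ω} := by
      intro ω hω
      simp only [Set.mem_setOf_eq] at hω ⊢
      rw [hsum ω] at hω
      push_neg at hω
      have hMpos : (0:ℝ) < M ω := by exact_mod_cast hM1 ω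
      have h1 : (1+ε)*μ * (M ω : ℝ) < K := (lt_div_iff₀ hMpos).1 hω
      have h2 : (M ω : ℝ) < K/((1+ε)*μ) := by
        rw [lt_div_iff₀ (by positivity)]; nlinarith
      have h3 : M ω ≤ n1 := Nat.le_floor h2.le
      calc K = ∑ i ∈ Finset.range (M ω), Z i ω := (hsum ω).symm
        _ ≤ ∑ i ∈ Finset.range n1, Z i ω :=
            Finset.sum_le_sum_of_subset_of_nonneg (Finset.range_subset_range.2 h3)
              (fun i _ _ => hZnn i ω)
    have htail := (bern_tail P Z μ hμ.le hμ1 hmeas hval hindep hident n1 K t).1 ht0.le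
    have hexpbound : Real.exp (-t*K + n1*(μ*(Real.exp t - 1))) ≤ δ/2 := by
      rw [← hexpL]
      apply Real.exp_le_exp.2
      have hcube : Real.exp t - 1 ≤ t + c*t^2 := by
        have h := exp_le_cubic ht0.le ht1
        have h2 : 2*c*t ≤ 1 := by nlinarith
        nlinarith [sq_nonneg t, mul_pos ht0 ht0, mul_pos (mul_pos ht0 ht0) ht0]
      have hexp1 : (0:ℝ) ≤ Real.exp t - 1 := by
        linarith [Real.one_le_exp ht0.le]
      have hn1le : (n1:ℝ) ≤ K/((1+ε)*μ) := Nat.floor_le (by positivity)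
      have hn1μ : (n1:ℝ)*μ ≤ K/(1+ε) := by
        have h := mul_le_mul_of_nonneg_right hn1le hμ.le
        have heq : K/((1+ε)*μ)*μ = K/(1+ε) := by field_simp
        rw [heq] at h
        exact h
      have hKdiv : (0:ℝ) ≤ K/(1+ε) := by positivity
      calc -t*K + n1*(μ*(Real.exp t - 1))
          = -t*K + ((n1:ℝ)*μ)*(Real.exp t - 1) := by ring
        _ ≤ -t*K + (K/(1+ε))*(Real.exp t - 1) := by
            have := mul_le_mul_of_nonneg_right hn1μ hexp1
            linarith
        _ ≤ -t*K + (K/(1+ε))*(t + c*t^2) := by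
            have := mul_le_mul_of_nonneg_left hcube hKdiv
            linarith
        _ ≤ -L := num1 ε L c K t hε0 hε1 hc1 hc2 hL0 hK1 htc hKlow
    refine prob_compl_bound P δ hδ0 _ (le_trans (measure_mono hsub1) ?_)
    exact le_trans htail (ENNReal.ofReal_le_ofReal hexpbound)
  · -- Part 2: lower bound
    set n2 : ℕ := ⌈(K+1)/((1-ε)*μ)⌉₊ with hn2_def
    have h1ε : (0:ℝ) < 1-ε := by linarith
    have hK0 : (0:ℝ) < K := by linarith
    have hsub2 : {ω | ¬ ((∑ i ∈ Finset.range (M ω), Z i ω) / (M ω : ℝ)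
          ≥ (K / (K + 1)) * ((1 - ε) * μ))}
        ⊆ {ω | (∑ i ∈ Finset.range n2, Z i ω) ≤ K} := by
      intro ω hω
      simp only [Set.mem_setOf_eq] at hω ⊢
      rw [hsum ω] at hω
      push_neg at hω
      have hMpos : (0:ℝ) < M ω := by exact_mod_cast hM1 ω
      have h1 : K / (M ω : ℝ) < (K*((1-ε)*μ))/(K+1) := by
        rw [div_mul_eq_mul_div] at hω
        exact hω
      have h2 : K*(K+1) < K*((1-ε)*μ) * (M ω : ℝ) := by
        rw [div_lt_div_iff₀ hMpos (by linarith : (0:ℝ) < K+1)] at h1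
        exact h1
      have h2' : K*(K+1) < K*((1-ε)*μ*(M ω : ℝ)) := by
        rw [← mul_assoc]
        exact h2
      have h3 : (K+1) < (1-ε)*μ * (M ω : ℝ) := lt_of_mul_lt_mul_left h2' hK0.le
      have h4 : (K+1)/((1-ε)*μ) < (M ω : ℝ) := by
        rw [div_lt_iff₀ (by positivity : (0:ℝ) < (1-ε)*μ)]
        nlinarith [h3]
      have h5 : n2 ≤ M ω := by
        rw [hn2_def]
        exact Nat.ceil_le.2 (by exact_mod_cast h4.le)
      calc (∑ i ∈ Finset.range n2, Z i ω)
          ≤ ∑ i ∈ Finset.range (M ω), Z i ω :=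
            Finset.sum_le_sum_of_subset_of_nonneg (Finset.range_subset_range.2 h5)
              (fun i _ _ => hZnn i ω)
        _ = K := hsum ω
    have htail := (bern_tail P Z μ hμ.le hμ1 hmeas hval hindep hident n2 K (-ε)).2
      (by linarith : -ε ≤ 0)
    have hexpbound : Real.exp (-(-ε)*K + n2*(μ*(Real.exp (-ε) - 1))) ≤ δ/2 := by
      rw [← hexpL]
      apply Real.exp_le_exp.2
      have hcube : Real.exp (-ε) - 1 ≤ -ε + ε^2/2 + (2/9)*ε^3 := by
        have h := exp_neg_le_cubic hε0.le hε1.le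
        linarith
      have hone : Real.exp (-ε) ≤ 1 := by
        rw [← Real.exp_zero]
        exact Real.exp_le_exp.2 (by linarith)
      have hqneg : Real.exp (-ε) - 1 ≤ 0 := by linarith
      have hn2c := Nat.le_ceil ((K+1)/((1-ε)*μ))
      rw [← hn2_def] at hn2c
      have hn2μ : (K+1)/(1-ε) ≤ (n2:ℝ)*μ := by
        have h := mul_le_mul_of_nonneg_right hn2c hμ.le
        have heq : (K+1)/((1-ε)*μ)*μ = (K+1)/(1-ε) := by field_simp
        rw [heq] at h
        exact h
      have hdivpos : (0:ℝ) ≤ (K+1)/(1-ε) := by positivity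
      calc -(-ε)*K + n2*(μ*(Real.exp (-ε) - 1))
          = ε*K + ((n2:ℝ)*μ)*(Real.exp (-ε) - 1) := by ring
        _ ≤ ε*K + ((K+1)/(1-ε))*(Real.exp (-ε) - 1) := by
            have := mul_le_mul_of_nonpos_right hn2μ hqneg
            linarith
        _ ≤ ε*K + ((K+1)/(1-ε))*(-ε + ε^2/2 + (2/9)*ε^3) := by
            have := mul_le_mul_of_nonneg_left hcube hdivpos
            linarith
        _ ≤ -L := num2 ε L c K hε0 hε1 hc1 hc2 hL0 hK1 hKlow
    refine prob_compl_bound P δ hδ0 _ (le_trans (measure_mono hsub2) ?_)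
    exact le_trans htail (ENNReal.ofReal_le_ofReal hexpbound)
end

section
/- Let X₁,...,X_{M₁} be i.i.d. Bernoulli random variables with mean p = I/n where I ≥ n·Υ₁/M₁ and Υ₁ = Υ₁(ε, δ/n) with ε ≤ 1/3. Then Pr[Σᵢ Xᵢ < Υ₁/2] ≤ exp(−(e−2)ln(2n/δ)/(2ε²)) ≤ δ/(2n). -/
set_option maxHeartbeats 1000000


open MeasureTheory ProbabilityTheory

/-- If `X₁,...,X_{M₁}` are i.i.d. Bernoulli with mean `p = I/n` and `I ≥ n·Υ₁/M₁`, where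
`Υ₁ = Υ₁(ε, δ/n)` and `ε ≤ 1/3`, then
`Pr[Σ Xᵢ < Υ₁/2] ≤ exp(−(e−2)ln(2n/δ)/(2ε²)) ≤ δ/(2n)`. -/
theorem stmt4
    {Ω : Type*} [MeasurableSpace Ω] (P : Measure Ω) [IsProbabilityMeasure P]
    (M₁ n : ℕ) (hM₁ : 0 < M₁) (hn : 1 ≤ n)
    (δ : ℝ) (hδ0 : 0 < δ) (hδ : δ ≤ 1 / 4)
    (ε : ℝ) (hε0 : 0 < ε) (hε : ε ≤ 1 / 3)
    (Υ₁ : ℝ)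
    (hΥ : Υ₁ = 1 + (1 + ε) * (4 * (Real.exp 1 - 2) * Real.log (2 * n / δ) / ε ^ 2))
    (I : ℝ) (hI : I ≥ n * Υ₁ / M₁)
    (X : ℕ → Ω → ℝ) (hmeas : ∀ i, Measurable (X i))
    (hval : ∀ i ω, X i ω = 0 ∨ X i ω = 1)
    (hindep : iIndepFun X P)
    (hident : ∀ i, P {ω | X i ω = 1} = ENNReal.ofReal (I / n)) :
    P {ω | (∑ i ∈ Finset.range M₁, X i ω) < Υ₁ / 2}
        ≤ ENNReal.ofReal (Real.exp (-((Real.exp 1 - 2) * Real.log (2 * n / δ)) / (2 * ε ^ 2))) ∧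
    Real.exp (-((Real.exp 1 - 2) * Real.log (2 * n / δ)) / (2 * ε ^ 2)) ≤ δ / (2 * n) := by
  set L : ℝ := Real.log (2 * n / δ) with hLdef
  have hn0 : (0:ℝ) < n := by exact_mod_cast hn
  have hM0 : (0:ℝ) < M₁ := by exact_mod_cast hM₁
  have hn1 : (1:ℝ) ≤ n := by exact_mod_cast hn
  have hratio : (1:ℝ) ≤ 2 * n / δ := by
    rw [le_div_iff₀ hδ0]
    linarith
  have hL0 : 0 ≤ L := Real.log_nonneg hratio
  have he2 : (0:ℝ) < Real.exp 1 - 2 := by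
    have := Real.exp_one_gt_d9; linarith
  have hε2 : (0:ℝ) < ε ^ 2 := by positivity
  set A : ℝ := (Real.exp 1 - 2) * L / ε ^ 2 with hAdef
  have hA0 : 0 ≤ A := by rw [hAdef]; positivity
  have hΥ' : Υ₁ = 1 + (1 + ε) * (4 * A) := by rw [hΥ, hAdef]; ring
  have hΥlb : 4 * A ≤ Υ₁ := by
    rw [hΥ']
    nlinarith [mul_nonneg hε0.le hA0]
  have hΥ1 : (1:ℝ) ≤ Υ₁ := by
    rw [hΥ']
    nlinarith [mul_nonneg (by linarith : (0:ℝ) ≤ 1 + ε) hA0]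
  -- p
  set p : ℝ := I / n with hpdef
  have hp_lb : Υ₁ / M₁ ≤ p := by
    rw [hpdef, div_le_div_iff₀ hM0 hn0]
    calc Υ₁ * n = (n * Υ₁ / M₁) * M₁ := by field_simp
    _ ≤ I * M₁ := by
        have := hI
        nlinarith
  have hp0 : 0 < p := lt_of_lt_of_le (by positivity) hp_lb
  have hp1 : p ≤ 1 := by
    have h := hident 0
    have h2 : ENNReal.ofReal p ≤ 1 := by
      rw [← h]; exact prob_le_one
    exact ENNReal.ofReal_le_one.mp h2
  have hMp : Υ₁ ≤ M₁ * p := by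
    have := (div_le_iff₀ hM0).mp hp_lb
    linarith
  -- indicator representation
  have hset : ∀ i, MeasurableSet {ω | X i ω = 1} :=
    fun i => (hmeas i) (measurableSet_singleton 1)
  have hind_i : ∀ i, X i = Set.indicator {ω | X i ω = 1} (fun _ => (1:ℝ)) := by
    intro i; funext ω
    rcases hval i ω with h | h
    · simp [Set.indicator, h]
    · simp [Set.indicator, h]
  have hXint : ∀ i, Integrable (X i) P := by
    intro i
    rw [hind_i i]
    exact (integrable_const (1:ℝ)).indicator (hset i)
  have hEX : ∀ i, ∫ ω, X i ω ∂P = p := by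
    intro i
    conv_lhs => rw [show (fun ω => X i ω) = X i from rfl, hind_i i]
    rw [integral_indicator_const _ (hset i), measureReal_def, hident i, smul_eq_mul, mul_one,
      ENNReal.toReal_ofReal (le_of_lt hp0)]
  set t : ℝ := -Real.log 2 with htdef
  have ht : t ≤ 0 := by
    rw [htdef]; simp [Real.log_nonneg, one_le_two]
  have het : Real.exp t = 1 / 2 := by
    rw [htdef, Real.exp_neg, Real.exp_log two_pos]; norm_num
  have hfun : ∀ i, (fun ω => Real.exp (t * X i ω)) = fun ω => 1 + (Real.exp t - 1) * X i ω := by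
    intro i; funext ω
    rcases hval i ω with h | h
    · simp [h]
    · simp [h]
  have hint_i : ∀ i, Integrable (fun ω => Real.exp (t * X i ω)) P := by
    intro i
    rw [hfun i]
    exact (integrable_const 1).add ((hXint i).const_mul _)
  have hmgf_i : ∀ i, mgf (X i) P t = 1 - p / 2 := by
    intro i
    rw [mgf, hfun i, integral_add (integrable_const 1) ((hXint i).const_mul _),
      integral_const, integral_const_mul, hEX i]
    simp [measure_univ, het]
    ring
  -- Chernoff
  have hS_int := hindep.integrable_exp_mul_sum (t := t) hmeas
    (fun i _ => hint_i i) (s := Finset.range M₁)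
  have hcher := measure_le_le_exp_mul_mgf (μ := P) (X := ∑ i ∈ Finset.range M₁, X i)
    (Υ₁ / 2) ht hS_int
  have hmgf_sum : mgf (∑ i ∈ Finset.range M₁, X i) P t = (1 - p / 2) ^ M₁ := by
    rw [hindep.mgf_sum hmeas]
    simp [hmgf_i]
  have hbase : (0:ℝ) ≤ 1 - p / 2 := by linarith
  have hpow : (1 - p / 2) ^ M₁ ≤ Real.exp ((M₁ : ℝ) * (-(p / 2))) := by
    rw [Real.exp_nat_mul]
    exact pow_le_pow_left₀ hbase (by linarith [Real.add_one_le_exp (-(p/2))]) M₁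
  set K : ℝ := -((Real.exp 1 - 2) * L) / (2 * ε ^ 2) with hKdef
  have hlog2 : Real.log 2 ≤ 3 / 4 := by
    have := Real.log_two_lt_d9; linarith
  have hexp_le : Real.exp (-t * (Υ₁ / 2)) * Real.exp ((M₁:ℝ) * (-(p / 2))) ≤ Real.exp K := by
    rw [← Real.exp_add, Real.exp_le_exp, htdef, hKdef]
    have h1 : Real.log 2 * (Υ₁ / 2) + (M₁:ℝ) * (-(p/2)) ≤ (Real.log 2 - 1) * (Υ₁ / 2) := by
      nlinarith
    have hhalf : -((Real.exp 1 - 2) * L) / (2 * ε ^ 2) = -A / 2 := by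
      rw [hAdef]; ring
    have h2 : (Real.log 2 - 1) * (Υ₁ / 2) ≤ -((Real.exp 1 - 2) * L) / (2 * ε ^ 2) := by
      rw [hhalf]
      nlinarith [mul_nonneg (by linarith : (0:ℝ) ≤ 3/4 - Real.log 2)
        (by linarith : (0:ℝ) ≤ Υ₁)]
    linarith
  have hfinal : (P {ω | (∑ i ∈ Finset.range M₁, X i) ω ≤ Υ₁ / 2}).toReal ≤ Real.exp K := by
    calc (P {ω | (∑ i ∈ Finset.range M₁, X i) ω ≤ Υ₁ / 2}).toReal
        ≤ Real.exp (-t * (Υ₁ / 2)) * mgf (∑ i ∈ Finset.range M₁, X i) P t := hcher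
      _ ≤ Real.exp K := by
          rw [hmgf_sum]
          calc Real.exp (-t * (Υ₁ / 2)) * (1 - p / 2) ^ M₁
              ≤ Real.exp (-t * (Υ₁ / 2)) * Real.exp ((M₁:ℝ) * (-(p / 2))) := by
                exact mul_le_mul_of_nonneg_left hpow (Real.exp_nonneg _)
            _ ≤ Real.exp K := hexp_le
  constructor
  · have hsub : {ω | (∑ i ∈ Finset.range M₁, X i ω) < Υ₁ / 2}
        ⊆ {ω | (∑ i ∈ Finset.range M₁, X i) ω ≤ Υ₁ / 2} := by
      intro ω hω
      simp only [Set.mem_setOf_eq, Finset.sum_apply] at *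
      exact le_of_lt hω
    calc P {ω | (∑ i ∈ Finset.range M₁, X i ω) < Υ₁ / 2}
        ≤ P {ω | (∑ i ∈ Finset.range M₁, X i) ω ≤ Υ₁ / 2} := measure_mono hsub
      _ = ENNReal.ofReal ((P {ω | (∑ i ∈ Finset.range M₁, X i) ω ≤ Υ₁ / 2}).toReal) := by
          rw [ENNReal.ofReal_toReal (measure_ne_top _ _)]
      _ ≤ ENNReal.ofReal (Real.exp K) := ENNReal.ofReal_le_ofReal hfinal
  · have hx0 : (0:ℝ) < 2 * n / δ := by positivity
    have hε2le : ε ^ 2 ≤ 1 / 9 := by nlinarith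
    have he27 : (2:ℝ) / 9 ≤ Real.exp 1 - 2 := by
      have := Real.exp_one_gt_d9; linarith
    have hAe : A * ε ^ 2 = (Real.exp 1 - 2) * L := by
      rw [hAdef]; field_simp
    have h2L : 2 * L ≤ A := by
      have a1 := mul_le_mul_of_nonneg_left hε2le hA0
      have a2 := mul_le_mul_of_nonneg_right he27 hL0
      nlinarith
    have hhalf : -((Real.exp 1 - 2) * L) / (2 * ε ^ 2) = -A / 2 := by
      rw [hAdef]; ring
    calc Real.exp (-((Real.exp 1 - 2) * L) / (2 * ε ^ 2))
        ≤ Real.exp (-L) := by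
          rw [hhalf, Real.exp_le_exp]
          linarith
      _ = δ / (2 * n) := by
          rw [hLdef, ← Real.log_inv, Real.exp_log (by positivity), inv_div]
end

section
/- Suppose that for every vertex set S of size k, |D₂(S)/M₂ − I(S)/n| ≤ ε·I(S*_k)/n, where S*_k maximizes I over k-sets. Let S_k be any k-set satisfying D₂(S_k) ≥ (1 − 1/e)·D₂(S*_k). Then I(S_k) ≥ [1 − 1/e − (2 − 1/e)ε]·I(S*_k). -/
/-- If every `k`-set `S` satisfies `|D₂(S)/M₂ − I(S)/n| ≤ ε·I(S*_k)/n` where `S*_k`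
maximizes `I` over `k`-sets, and `S_k` is a `k`-set with
`D₂(S_k) ≥ (1 − 1/e)·D₂(S*_k)`, then `I(S_k) ≥ [1 − 1/e − (2 − 1/e)ε]·I(S*_k)`. -/
theorem stmt6 {V : Type*} [Fintype V] [DecidableEq V]
    (I : Finset V → ℝ) (hI : ∀ S, 0 ≤ I S)
    (D₂ : Finset V → ℕ) (M₂ n : ℕ) (hM₂ : 0 < M₂) (hn : 0 < n)
    (ε : ℝ) (hε : 0 < ε) (k : ℕ) (hk : 1 ≤ k)
    (Sstar : Finset V) (hSstar : Sstar.card = k)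
    (hmax : ∀ S : Finset V, S.card = k → I S ≤ I Sstar)
    (hdev : ∀ S : Finset V, S.card = k →
      |(D₂ S : ℝ) / M₂ - I S / n| ≤ ε * I Sstar / n)
    (Sk : Finset V) (hSk : Sk.card = k)
    (hgreedy : (D₂ Sk : ℝ) ≥ (1 - 1 / Real.exp 1) * D₂ Sstar) :
    I Sk ≥ (1 - 1 / Real.exp 1 - (2 - 1 / Real.exp 1) * ε) * I Sstar := by
  have hn' : (0:ℝ) < n := by exact_mod_cast hn
  have hM' : (0:ℝ) < M₂ := by exact_mod_cast hM₂
  have he : (1:ℝ) ≤ Real.exp 1 := Real.one_le_exp (by norm_num)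
  have he0 : (0:ℝ) < Real.exp 1 := Real.exp_pos 1
  have hα : 0 ≤ 1 - 1 / Real.exp 1 := by
    have : 1 / Real.exp 1 ≤ 1 := by
      rw [div_le_one he0]; exact he
    linarith
  have h1 := (abs_le.mp (hdev Sk hSk)).2
  have h2 := (abs_le.mp (hdev Sstar hSstar)).1
  have s1 : (1 - 1 / Real.exp 1) * ((D₂ Sstar : ℝ) / M₂) ≤ (D₂ Sk : ℝ) / M₂ := by
    rw [mul_div_assoc']
    gcongr
  have s2 : I Sstar / n - ε * I Sstar / n ≤ (D₂ Sstar : ℝ) / M₂ := by linarith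
  have s3 := mul_le_mul_of_nonneg_left s2 hα
  have key : (1 - 1 / Real.exp 1 - (2 - 1 / Real.exp 1) * ε) * I Sstar / n ≤ I Sk / n := by
    ring_nf at s1 s3 h1 ⊢
    linarith
  exact (div_le_div_iff_of_pos_right hn').mp key
end

section
/- Let D be a monotone submodular coverage function as above, and let S_k = {u_1,...,u_k} be built greedily (u_i maximizes marginal gain at step i over all of V), and S'_k = {u'_1,...,u'_k} be built greedily restricted to U = {v : D({v}) > T}. Let q be the smallest index such that the marginal gain of u'_q in building S'_k is ≤ T (q = k+1 if none exists). Then D(S'_k) ≥ D(S_k) − (k − q + 1)·T. -/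
/-- Filtered greedy: if `S_k` is built greedily over all of `V` and `S'_k` greedily over
`U = {v : D({v}) > T}`, the two runs coincide while marginal gains exceed `T` (consistent
tie-breaking), and `q` is the first (1-based) step at which the marginal gain of the
restricted run drops to `≤ T` (`q = k+1` if none), then
`D(S'_k) ≥ D(S_k) − (k − q + 1)·T`. -/
theorem stmt8 {V : Type*} [Fintype V] [DecidableEq V]
    (M : ℕ) (R : Fin M → Finset V)
    (D : Finset V → ℕ)
    (hD : ∀ S, D S = (Finset.univ.filter fun i : Fin M => (R i ∩ S).Nonempty).card)
    (k : ℕ) (hk : 1 ≤ k) (T : ℝ) (hT : 0 ≤ T)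
    (u u' : ℕ → V)
    (S S' : ℕ → Finset V)
    (hS : ∀ i, S i = (Finset.range i).image u)
    (hS' : ∀ i, S' i = (Finset.range i).image u')
    -- unrestricted greedy: at each step `u i` maximizes the marginal gain over all of `V`
    (hgreedy : ∀ i < k, ∀ v : V, D (insert v (S i)) ≤ D (insert (u i) (S i)))
    -- restricted greedy: `u' i ∈ U` and maximizes the marginal gain over `U`
    (hU : ∀ i < k, (D {u' i} : ℝ) > T)
    (hgreedy' : ∀ i < k, ∀ v : V, (D {v} : ℝ) > T →
      D (insert v (S' i)) ≤ D (insert (u' i) (S' i)))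
    (q : ℕ) (hq1 : 1 ≤ q) (hq2 : q ≤ k + 1)
    -- before step `q`, all marginal gains of the restricted run exceed `T`
    (hqbig : ∀ j, 1 ≤ j → j < q → T < (D (S' j) : ℝ) - D (S' (j - 1)))
    -- at step `q` (if it exists), the marginal gain is at most `T`
    (hqsmall : q ≤ k → (D (S' q) : ℝ) - D (S' (q - 1)) ≤ T)
    -- consistent tie-breaking: the two runs coincide while gains exceed `T`
    (hcoin : ∀ i, i + 1 < q → u i = u' i) :
    (D (S' k) : ℝ) ≥ (D (S k) : ℝ) - ((k : ℝ) - q + 1) * T := by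
  classical
  set F : Finset V → Finset (Fin M) :=
    fun A => Finset.univ.filter fun i : Fin M => (R i ∩ A).Nonempty with hF
  have hDF : ∀ A, D A = (F A).card := hD
  have hFmono : ∀ {A B : Finset V}, A ⊆ B → F A ⊆ F B := by
    intro A B hAB
    intro i hi
    simp only [hF, Finset.mem_filter] at hi ⊢
    obtain ⟨_, x, hx⟩ := hi
    exact ⟨Finset.mem_univ i, x, Finset.mem_inter.2
      ⟨(Finset.mem_inter.1 hx).1, hAB (Finset.mem_inter.1 hx).2⟩⟩
  have hDmono : ∀ {A B : Finset V}, A ⊆ B → D A ≤ D B := by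
    intro A B hAB
    rw [hDF, hDF]
    exact Finset.card_le_card (hFmono hAB)
  have hins : ∀ (v : V) (A : Finset V), F (insert v A) = F A ∪ F {v} := by
    intro v A
    ext i
    simp only [hF, Finset.mem_filter, Finset.mem_union, Finset.insert_eq,
      Finset.inter_union_distrib_left, Finset.mem_univ, true_and]
    constructor
    · rintro ⟨x, hx⟩
      rcases Finset.mem_union.1 hx with h | h
      · exact Or.inr ⟨x, h⟩
      · exact Or.inl ⟨x, h⟩
    · rintro (⟨x, hx⟩ | ⟨x, hx⟩)
      · exact ⟨x, Finset.mem_union.2 (Or.inr hx)⟩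
      · exact ⟨x, Finset.mem_union.2 (Or.inl hx)⟩
  have hgain : ∀ (v : V) (A : Finset V),
      D (insert v A) = D A + (F {v} \ F A).card := by
    intro v A
    rw [hDF, hDF, hins]
    rw [Finset.union_comm, ← Finset.card_sdiff_add_card]
    omega
  have hsub : ∀ (v : V) {A B : Finset V}, A ⊆ B →
      (F {v} \ F B).card ≤ (F {v} \ F A).card := by
    intro v A B hAB
    exact Finset.card_le_card (Finset.sdiff_subset_sdiff (le_refl _) (hFmono hAB))
  -- step relations
  have hSstep : ∀ i, S (i + 1) = insert (u i) (S i) := by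
    intro i; rw [hS, hS, Finset.range_add_one, Finset.image_insert]
  have hS'step : ∀ i, S' (i + 1) = insert (u' i) (S' i) := by
    intro i; rw [hS', hS', Finset.range_add_one, Finset.image_insert]
  set g : ℕ → ℕ := fun i => (F {u i} \ F (S i)).card with hg
  have hDstep : ∀ i, D (S (i + 1)) = D (S i) + g i := by
    intro i; rw [hSstep, hgain]
  -- monotonicity of S, S'
  have hSmono : ∀ {i j : ℕ}, i ≤ j → S i ⊆ S j := by
    intro i j hij
    rw [hS, hS]
    exact Finset.image_subset_image (Finset.range_subset_range.2 hij)
  have hS'mono : ∀ {i j : ℕ}, i ≤ j → S' i ⊆ S' j := by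
    intro i j hij
    rw [hS', hS']
    exact Finset.image_subset_image (Finset.range_subset_range.2 hij)
  -- greedy gains are non-increasing
  have hgmono : ∀ i, i + 1 < k → g (i + 1) ≤ g i := by
    intro i hi
    have h1 : (F {u (i+1)} \ F (S (i+1))).card ≤ (F {u (i+1)} \ F (S i)).card :=
      hsub _ (hSmono (Nat.le_succ i))
    have h2 : D (insert (u (i+1)) (S i)) ≤ D (insert (u i) (S i)) :=
      hgreedy i (by omega) _
    rw [hgain, hgain] at h2
    simp only [hg]
    omega
  by_cases hqk : q = k + 1
  · -- no step with small gain: the two runs coincide entirely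
    have hSeq : S k = S' k := by
      rw [hS, hS']
      apply Finset.image_congr
      intro i hi
      exact hcoin i (by simp [Finset.mem_coe, Finset.mem_range] at hi; omega)
    rw [← hSeq, hqk]
    push_cast
    ring_nf
    nlinarith [hT]
  · have hqk' : q ≤ k := by omega
    set p : ℕ := q - 1 with hp
    have hpq : q = p + 1 := by omega
    have hpk : p < k := by omega
    -- the runs coincide up to step p
    have hSeqp : S p = S' p := by
      rw [hS, hS']
      apply Finset.image_congr
      intro i hi
      exact hcoin i (by simp [Finset.mem_coe, Finset.mem_range] at hi; omega)
    -- gain at step p is ≤ T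
    have hgp : (g p : ℝ) ≤ T := by
      by_cases hv : (D {u p} : ℝ) > T
      · have h1 : D (insert (u p) (S' p)) ≤ D (insert (u' p) (S' p)) :=
          hgreedy' p hpk _ hv
        rw [← hS'step] at h1
        have h2 : (D (S' (p+1)) : ℝ) - D (S' p) ≤ T := by
          have := hqsmall hqk'
          rw [hpq] at this
          simpa [hpq] using this
        have h3 : D (insert (u p) (S' p)) = D (S' p) + (F {u p} \ F (S' p)).card :=
          hgain _ _
        have h4 : (g p : ℝ) ≤ (D (S' (p+1)) : ℝ) - D (S' p) := by
          simp only [hg, hSeqp]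
          have : (D (insert (u p) (S' p)) : ℝ) ≤ D (S' (p+1)) := by exact_mod_cast h1
          rw [h3] at this
          push_cast at this ⊢
          linarith
        linarith
      · push_neg at hv
        have h1 : g p ≤ D {u p} := by
          simp only [hg, hDF]
          exact Finset.card_le_card (Finset.sdiff_subset)
        calc (g p : ℝ) ≤ D {u p} := by exact_mod_cast h1
          _ ≤ T := hv
    -- all gains from step p on are ≤ T
    have hgall : ∀ i, p ≤ i → i < k → (g i : ℝ) ≤ T := by
      intro i hpi hik
      induction i with
      | zero =>
        have : p = 0 := by omega
        rw [← this]; exact hgp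
      | succ n ih =>
        by_cases hpn : p ≤ n
        · have h1 : g (n + 1) ≤ g n := hgmono n hik
          have h2 : (g n : ℝ) ≤ T := ih hpn (by omega)
          calc (g (n+1) : ℝ) ≤ g n := by exact_mod_cast h1
            _ ≤ T := h2
        · have : p = n + 1 := by omega
          rw [← this]; exact hgp
    -- accumulate: D (S i) ≤ D (S p) + (i - p) * T for p ≤ i ≤ k
    have hacc : ∀ i, p ≤ i → i ≤ k → (D (S i) : ℝ) ≤ D (S p) + ((i : ℝ) - p) * T := by
      intro i hpi hik
      induction i with
      | zero =>
        have : p = 0 := by omega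
        simp [this]
      | succ n ih =>
        by_cases hpn : p ≤ n
        · have h1 : (D (S n) : ℝ) ≤ D (S p) + ((n : ℝ) - p) * T := ih hpn (by omega)
          have h2 : (g n : ℝ) ≤ T := hgall n hpn (by omega)
          have h3 : D (S (n+1)) = D (S n) + g n := hDstep n
          push_cast [h3]
          push_cast at h1
          nlinarith
        · have hpn1 : p = n + 1 := by omega
          rw [← hpn1]
          have : ((p : ℝ) - p) * T = 0 := by ring
          linarith
    have h5 : (D (S k) : ℝ) ≤ D (S p) + ((k : ℝ) - p) * T := hacc k (by omega) (le_refl _)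
    have h6 : D (S p) ≤ D (S' k) := by
      rw [hSeqp]
      exact hDmono (hS'mono (by omega))
    have h6' : (D (S p) : ℝ) ≤ D (S' k) := by exact_mod_cast h6
    have hpcast : (p : ℝ) = (q : ℝ) - 1 := by
      rw [hp]
      push_cast [Nat.cast_sub hq1]
      ring
    rw [hpcast] at h5
    have : ((k : ℝ) - ((q : ℝ) - 1)) = (k : ℝ) - q + 1 := by ring
    rw [this] at h5
    linarith
end

section
/- In the setting of the filtered greedy algorithm, if D* = max_{v∈V} D({v}) ≥ 2 and the threshold is T = min{D*/(k−1), D* − 1}, then D(S'_k) ≥ (1/2)·D(S_k). -/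
open Finset

private def cov {V : Type*} [Fintype V] [DecidableEq V] {M : ℕ}
    (R : Fin M → Finset V) (A : Finset V) : ℕ :=
  (Finset.univ.filter fun i : Fin M => (R i ∩ A).Nonempty).card

private lemma cov_mono {V : Type*} [Fintype V] [DecidableEq V] {M : ℕ}
    (R : Fin M → Finset V) {A B : Finset V} (h : A ⊆ B) : cov R A ≤ cov R B := by
  apply Finset.card_le_card
  intro i hi
  simp only [Finset.mem_filter, Finset.mem_univ, true_and] at hi ⊢
  exact hi.mono (Finset.inter_subset_inter le_rfl h)

private lemma cov_insert {V : Type*} [Fintype V] [DecidableEq V] {M : ℕ}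
    (R : Fin M → Finset V) (v : V) (A : Finset V) :
    cov R (insert v A) =
      cov R A + (Finset.univ.filter fun i : Fin M => v ∈ R i ∧ ¬(R i ∩ A).Nonempty).card := by
  classical
  unfold cov
  have key : ∀ i : Fin M, (R i ∩ insert v A).Nonempty ↔
      ((R i ∩ A).Nonempty ∨ (v ∈ R i ∧ ¬(R i ∩ A).Nonempty)) := by
    intro i
    simp only [Finset.Nonempty, Finset.mem_inter, Finset.mem_insert]
    constructor
    · rintro ⟨x, hx1, hx2 | hx3⟩
      · by_cases hA : ∃ x, x ∈ R i ∧ x ∈ A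
        · exact Or.inl hA
        · exact Or.inr ⟨hx2 ▸ hx1, hA⟩
      · exact Or.inl ⟨x, hx1, hx3⟩
    · rintro (⟨x, hx1, hx2⟩ | ⟨h1, _⟩)
      · exact ⟨x, hx1, Or.inr hx2⟩
      · exact ⟨v, h1, Or.inl rfl⟩
  rw [Finset.filter_congr (fun i _ => by exact key i), Finset.filter_or,
    Finset.card_union_of_disjoint]
  rw [Finset.disjoint_left]
  intro a ha hb
  simp only [Finset.mem_filter] at ha hb
  exact hb.2.2 ha.2

private lemma cov_insert_le {V : Type*} [Fintype V] [DecidableEq V] {M : ℕ}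
    (R : Fin M → Finset V) (v : V) (A : Finset V) :
    cov R (insert v A) ≤ cov R A + cov R {v} := by
  rw [cov_insert]
  have : (Finset.univ.filter fun i : Fin M => v ∈ R i ∧ ¬(R i ∩ A).Nonempty).card ≤
      cov R {v} := by
    unfold cov
    apply Finset.card_le_card
    intro i hi
    simp only [Finset.mem_filter, Finset.mem_univ, true_and] at hi ⊢
    exact ⟨v, Finset.mem_inter.mpr ⟨hi.1, Finset.mem_singleton_self v⟩⟩
  omega

private lemma cov_submod {V : Type*} [Fintype V] [DecidableEq V] {M : ℕ}
    (R : Fin M → Finset V) (v : V) {A B : Finset V} (h : A ⊆ B) :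
    cov R (insert v B) + cov R A ≤ cov R (insert v A) + cov R B := by
  rw [cov_insert, cov_insert]
  have : (Finset.univ.filter fun i : Fin M => v ∈ R i ∧ ¬(R i ∩ B).Nonempty).card ≤
      (Finset.univ.filter fun i : Fin M => v ∈ R i ∧ ¬(R i ∩ A).Nonempty).card := by
    apply Finset.card_le_card
    intro i hi
    simp only [Finset.mem_filter, Finset.mem_univ, true_and] at hi ⊢
    exact ⟨hi.1, fun hn => hi.2 (hn.mono (Finset.inter_subset_inter le_rfl h))⟩
  omega

/-- Filtered greedy with threshold `T = min{D*/(k−1), D*−1}` where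
`D* = max_v D({v}) ≥ 2`: the filtered greedy set `S'_k` satisfies
`D(S'_k) ≥ (1/2)·D(S_k)`. -/
theorem stmt9 {V : Type*} [Fintype V] [DecidableEq V] [Nonempty V]
    (M : ℕ) (R : Fin M → Finset V)
    (D : Finset V → ℕ)
    (hD : ∀ S, D S = (Finset.univ.filter fun i : Fin M => (R i ∩ S).Nonempty).card)
    (Dstar : ℕ) (hDstar : (Dstar : ℤ) = Finset.univ.sup' Finset.univ_nonempty (fun v : V => (D {v} : ℤ)))
    (hDstar2 : 2 ≤ Dstar)
    (k : ℕ) (hk : 1 ≤ k)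
    (T : ℝ) (hT : T = min ((Dstar : ℝ) / ((k : ℝ) - 1)) ((Dstar : ℝ) - 1))
    (u u' : ℕ → V)
    (S S' : ℕ → Finset V)
    (hS : ∀ i, S i = (Finset.range i).image u)
    (hS' : ∀ i, S' i = (Finset.range i).image u')
    (hgreedy : ∀ i < k, ∀ v : V, D (insert v (S i)) ≤ D (insert (u i) (S i)))
    (hU : ∀ i < k, (D {u' i} : ℝ) > T)
    (hgreedy' : ∀ i < k, ∀ v : V, (D {v} : ℝ) > T →
      D (insert v (S' i)) ≤ D (insert (u' i) (S' i)))
    (q : ℕ) (hq1 : 1 ≤ q) (hq2 : q ≤ k + 1)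
    (hqbig : ∀ j, 1 ≤ j → j < q → T < (D (S' j) : ℝ) - D (S' (j - 1)))
    (hqsmall : q ≤ k → (D (S' q) : ℝ) - D (S' (q - 1)) ≤ T)
    (hcoin : ∀ i, i + 1 < q → u i = u' i) :
    (D (S' k) : ℝ) ≥ (1 / 2) * (D (S k) : ℝ) := by
  classical
  have hDfun : D = cov R := funext fun A => hD A
  subst hDfun
  -- basic structure
  have hS'0 : S' 0 = ∅ := by simp [hS']
  have hSstep : ∀ i, S (i + 1) = insert (u i) (S i) := by
    intro i; rw [hS, hS, Finset.range_add_one, Finset.image_insert]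
  have hS'step : ∀ i, S' (i + 1) = insert (u' i) (S' i) := by
    intro i; rw [hS', hS', Finset.range_add_one, Finset.image_insert]
  have hS'mono : ∀ i j, i ≤ j → S' i ⊆ S' j := by
    intro i j hij
    rw [hS', hS']
    exact Finset.image_subset_image (Finset.range_subset_range.mpr hij)
  -- D* is attained and is a max
  obtain ⟨v₀, -, hv₀⟩ := Finset.exists_mem_eq_sup' (Finset.univ_nonempty (α := V))
    (fun v : V => (cov R {v} : ℤ))
  have hv₀' : Dstar = cov R {v₀} := by exact_mod_cast hDstar.trans hv₀
  -- T bounds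
  have hDstar2R : (2 : ℝ) ≤ (Dstar : ℝ) := by exact_mod_cast hDstar2
  have hT0 : 0 ≤ T := by
    rw [hT]
    apply le_min
    · apply div_nonneg (by linarith)
      have : (1 : ℝ) ≤ (k : ℝ) := by exact_mod_cast hk
      linarith
    · linarith
  have hTlt : T < (Dstar : ℝ) := by
    rw [hT]
    exact lt_of_le_of_lt (min_le_right _ _) (by linarith)
  have hkT : ((k : ℝ) - 1) * T ≤ (Dstar : ℝ) := by
    rcases eq_or_lt_of_le hk with h1 | h2
    · rw [← h1]; norm_num
    · have hk2 : (2 : ℝ) ≤ (k : ℝ) := by exact_mod_cast h2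
      have hpos : (0 : ℝ) < (k : ℝ) - 1 := by linarith
      have hTle : T ≤ (Dstar : ℝ) / ((k : ℝ) - 1) := hT ▸ min_le_left _ _
      calc ((k : ℝ) - 1) * T ≤ ((k : ℝ) - 1) * ((Dstar : ℝ) / ((k : ℝ) - 1)) := by
            exact mul_le_mul_of_nonneg_left hTle (le_of_lt hpos)
        _ = (Dstar : ℝ) := by field_simp
  -- D(S' k) ≥ D*
  have hstar1 : Dstar ≤ cov R (S' 1) := by
    have hgt : (cov R {v₀} : ℝ) > T := by rw [← hv₀']; exact hTlt
    have := hgreedy' 0 hk v₀ hgt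
    rw [hS'0] at this
    have h1 : S' 1 = {u' 0} := by rw [hS'step 0, hS'0]; rfl
    rw [h1]
    calc Dstar = cov R {v₀} := hv₀'
      _ ≤ cov R (insert (u' 0) ∅) := this
      _ = cov R {u' 0} := rfl
  have hstark : (Dstar : ℝ) ≤ (cov R (S' k) : ℝ) := by
    exact_mod_cast hstar1.trans (cov_mono R (hS'mono 1 k hk))
  by_cases hqk : q ≤ k
  · -- main case: q ≤ k
    -- q ≥ 2
    have hq2' : 2 ≤ q := by
      by_contra hcon
      have hq1' : q = 1 := by omega
      have := hqsmall hqk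
      rw [hq1'] at this
      simp only [Nat.sub_self] at this
      have hS'1 : S' 1 = {u' 0} := by rw [hS'step 0, hS'0]; rfl
      rw [hS'1, hS'0] at this
      have h0 : cov R (∅ : Finset V) = 0 := by simp [cov]
      rw [h0] at this
      have := hU 0 hk
      push_cast at *
      linarith
    obtain ⟨p, hp⟩ : ∃ p, q = p + 1 := ⟨q - 1, by omega⟩
    have hp1 : 1 ≤ p := by omega
    have hpk : p < k := by omega
    -- S agrees with S' up to p
    have hSS' : ∀ i, i ≤ p → S i = S' i := by
      intro i hi
      rw [hS, hS']
      apply Finset.image_congr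
      intro x hx
      rw [Finset.mem_coe, Finset.mem_range] at hx
      exact hcoin x (by omega)
    -- chain : greedy marginal gains are nonincreasing
    have chain : ∀ j, p ≤ j → j < k →
        cov R (insert (u j) (S j)) + cov R (S p) ≤
        cov R (insert (u p) (S p)) + cov R (S j) := by
      intro j
      induction j with
      | zero =>
        intro h1 _
        have : p = 0 := by omega
        rw [this]
      | succ j ih =>
        intro hpj hjk
        rcases Nat.eq_or_lt_of_le hpj with he | hlt
        · rw [← he]
        · have hpj' : p ≤ j := by omega
          have step : cov R (insert (u (j+1)) (S (j+1))) + cov R (S j) ≤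
              cov R (insert (u j) (S j)) + cov R (S (j+1)) := by
            have hsub : S j ⊆ S (j+1) := by
              rw [hSstep]; exact Finset.subset_insert _ _
            have h1 := cov_submod R (u (j+1)) hsub
            have h2 := hgreedy j (by omega) (u (j+1))
            omega
          have ih' := ih hpj' (by omega)
          have hb : cov R (S (j+1)) = cov R (insert (u j) (S j)) := by rw [hSstep]
          omega
    -- telescoping
    set A := cov R (insert (u p) (S p)) with hA
    set B := cov R (S p) with hB
    have hBA : B ≤ A := cov_mono R (Finset.subset_insert _ _)
    have tele : ∀ m, p + m ≤ k → cov R (S (p + m)) + m * B ≤ B + m * A := by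
      intro m
      induction m with
      | zero => intro _; simp [hB]
      | succ m ih =>
        intro hm
        have ih' := ih (by omega)
        have hch := chain (p + m) (by omega) (by omega)
        have hb : cov R (S (p + m + 1)) = cov R (insert (u (p + m)) (S (p + m))) := by
          rw [hSstep]
        have e1 : (m + 1) * B = m * B + B := by ring
        have e2 : (m + 1) * A = m * A + A := by ring
        have : p + (m + 1) = p + m + 1 := by ring
        rw [this, e1, e2, hb]
        omega
    have htele := tele (k - p) (by omega)
    rw [show p + (k - p) = k by omega] at htele
    -- A ≤ B + T over the reals
    have hABT : (A : ℝ) ≤ (B : ℝ) + T := by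
      have hSp : S p = S' p := hSS' p le_rfl
      by_cases hv : (cov R {u p} : ℝ) > T
      · have h1 := hgreedy' p hpk (u p) hv
        have h2 := hqsmall hqk
        rw [hp] at h2
        simp only [Nat.add_sub_cancel] at h2
        have h3 : cov R (S' (p + 1)) = cov R (insert (u' p) (S' p)) := by rw [hS'step]
        have hAle : A ≤ cov R (S' (p + 1)) := by
          rw [hA, hSp, h3]; exact h1
        have hAleR : (A : ℝ) ≤ (cov R (S' (p + 1)) : ℝ) := by exact_mod_cast hAle
        have hBeq : (B : ℝ) = (cov R (S' p) : ℝ) := by rw [hB, hSp]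
        linarith
      · push_neg at hv
        have h1 : A ≤ B + cov R {u p} := cov_insert_le R (u p) (S p)
        have h1' : (A : ℝ) ≤ (B : ℝ) + (cov R {u p} : ℝ) := by exact_mod_cast h1
        linarith
    -- combine
    have hteleR : (cov R (S k) : ℝ) + ((k - p : ℕ) : ℝ) * (B : ℝ) ≤
        (B : ℝ) + ((k - p : ℕ) : ℝ) * (A : ℝ) := by exact_mod_cast htele
    have hkp : ((k - p : ℕ) : ℝ) = (k : ℝ) - (p : ℝ) := by
      rw [Nat.cast_sub (le_of_lt hpk)]
    have hkp1 : ((k : ℝ) - (p : ℝ)) ≤ (k : ℝ) - 1 := by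
      have : (1 : ℝ) ≤ (p : ℝ) := by exact_mod_cast hp1
      linarith
    have hkp0 : (0 : ℝ) ≤ (k : ℝ) - (p : ℝ) := by
      have : (p : ℝ) ≤ (k : ℝ) := by exact_mod_cast le_of_lt hpk
      linarith
    have hmain : (cov R (S k) : ℝ) ≤ (B : ℝ) + ((k : ℝ) - (p : ℝ)) * T := by
      rw [hkp] at hteleR
      nlinarith [hABT, hkp0]
    have hBk : (B : ℝ) ≤ (cov R (S' k) : ℝ) := by
      have : B = cov R (S' p) := by rw [hB, hSS' p le_rfl]
      rw [this]
      exact_mod_cast cov_mono R (hS'mono p k (le_of_lt hpk))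
    have hkpT : ((k : ℝ) - (p : ℝ)) * T ≤ ((k : ℝ) - 1) * T :=
      mul_le_mul_of_nonneg_right hkp1 hT0
    have hnn : (0 : ℝ) ≤ (cov R (S' k) : ℝ) := by positivity
    linarith
  · -- q = k + 1 : the two greedy runs coincide
    have hq : q = k + 1 := by omega
    have : S k = S' k := by
      rw [hS, hS']
      apply Finset.image_congr
      intro x hx
      rw [Finset.mem_coe, Finset.mem_range] at hx
      exact hcoin x (by omega)
    rw [this]
    have hnn : (0 : ℝ) ≤ (cov R (S' k) : ℝ) := by positivity
    linarith
end

section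
/- For a monotone submodular set function D : 2^V → ℝ≥0 with D(∅) = 0 and any k ≥ 1, the greedy algorithm that iteratively adds the element with maximum marginal gain produces a set S_k of size k with D(S_k) ≥ (1 − 1/e)·max_{|S|=k} D(S). -/
/-- Nemhauser–Wolsey–Fisher: for a monotone submodular `D : 2^V → ℝ≥0` with `D(∅) = 0`,
the greedy algorithm produces a `k`-set `S_k` with `D(S_k) ≥ (1 − 1/e)·max_{|S|=k} D(S)`. -/
theorem stmt10 {V : Type*} [Fintype V] [DecidableEq V]
    (D : Finset V → ℝ)
    (hnonneg : ∀ S, 0 ≤ D S)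
    (hempty : D ∅ = 0)
    (hmono : ∀ A B : Finset V, A ⊆ B → D A ≤ D B)
    (hsub : ∀ A B : Finset V, A ⊆ B → ∀ v : V, v ∉ B →
      D (insert v B) - D B ≤ D (insert v A) - D A)
    (k : ℕ) (hk : 1 ≤ k) (hkV : k ≤ Fintype.card V)
    (u : ℕ → V)
    (S : ℕ → Finset V) (hS : ∀ i, S i = (Finset.range i).image u)
    (hdistinct : ∀ i < k, u i ∉ S i)
    (hgreedy : ∀ i < k, ∀ v : V, D (insert v (S i)) ≤ D (insert (u i) (S i))) :
    ∀ Sopt : Finset V, Sopt.card = k →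
      D (S k) ≥ (1 - 1 / Real.exp 1) * D Sopt := by
  intro Sopt hcard
  have hk0 : (0:ℝ) < k := by exact_mod_cast hk
  -- marginal sum lemma
  have hsum : ∀ A T : Finset V, D (A ∪ T) ≤ D A + ∑ v ∈ T \ A, (D (insert v A) - D A) := by
    intro A T
    induction T using Finset.induction_on with
    | empty => simp
    | @insert x T' hx ih =>
      by_cases hxA : x ∈ A
      · have h1 : A ∪ insert x T' = A ∪ T' := by
          ext y; simp only [Finset.mem_union, Finset.mem_insert]
          constructor
          · rintro (h | rfl | h) <;> tauto
          · tauto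
        have h2 : insert x T' \ A = T' \ A := by
          ext y; simp only [Finset.mem_sdiff, Finset.mem_insert]
          constructor
          · rintro ⟨(rfl | h), h2⟩ <;> tauto
          · tauto
        rw [h1, h2]; exact ih
      · have hxAT : x ∉ A ∪ T' := by simp [hxA, hx]
        have hstep := hsub A (A ∪ T') Finset.subset_union_left x hxAT
        have h1 : A ∪ insert x T' = insert x (A ∪ T') := by
          ext y; simp only [Finset.mem_union, Finset.mem_insert]; tauto
        have h2 : insert x T' \ A = insert x (T' \ A) := by
          ext y; simp only [Finset.mem_sdiff, Finset.mem_insert]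
          constructor
          · rintro ⟨(rfl | h), h2⟩ <;> tauto
          · rintro (rfl | ⟨h, h2⟩) <;> tauto
        have hxT'A : x ∉ T' \ A := by simp [hx]
        rw [h1, h2, Finset.sum_insert hxT'A]
        linarith
  set OPT := D Sopt with hOPTdef
  have hOPT0 : 0 ≤ OPT := hnonneg Sopt
  have hfac : 0 ≤ 1 - 1/(k:ℝ) := by
    have h1 : 1/(k:ℝ) ≤ 1 := by
      rw [div_le_one hk0]; exact_mod_cast hk
    linarith
  have key : ∀ i, i ≤ k → OPT - D (S i) ≤ (1 - 1/(k:ℝ))^i * OPT := by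
    intro i
    induction i with
    | zero =>
      intro _
      have h0 : S 0 = ∅ := by rw [hS]; simp
      rw [h0, hempty]; simp
    | succ i ih =>
      intro hik
      have hik' : i < k := hik
      have hih := ih (le_of_lt hik')
      have hSsucc : S (i+1) = insert (u i) (S i) := by
        rw [hS, hS, Finset.range_add_one, Finset.image_insert]
      have hΔ0 : 0 ≤ D (S (i+1)) - D (S i) := by
        have := hmono (S i) (S (i+1)) (by rw [hSsucc]; exact Finset.subset_insert _ _)
        linarith
      have h1 : OPT ≤ D (S i ∪ Sopt) := hmono Sopt _ Finset.subset_union_right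
      have h2 := hsum (S i) Sopt
      have h3 : ∑ v ∈ Sopt \ S i, (D (insert v (S i)) - D (S i)) ≤
          (Sopt \ S i).card • (D (S (i+1)) - D (S i)) := by
        apply Finset.sum_le_card_nsmul
        intro v _
        have := hgreedy i hik' v
        rw [hSsucc]; linarith
      rw [nsmul_eq_mul] at h3
      have hcard' : ((Sopt \ S i).card : ℝ) ≤ k := by
        have hc := Finset.card_le_card (Finset.sdiff_subset : Sopt \ S i ⊆ Sopt)
        rw [hcard] at hc
        exact_mod_cast hc
      have h4 : ((Sopt \ S i).card : ℝ) * (D (S (i+1)) - D (S i)) ≤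
          (k:ℝ) * (D (S (i+1)) - D (S i)) :=
        mul_le_mul_of_nonneg_right hcard' hΔ0
      have h5 : OPT - D (S i) ≤ (k:ℝ) * (D (S (i+1)) - D (S i)) := by linarith
      have h6 : OPT - D (S (i+1)) ≤ (1 - 1/(k:ℝ)) * (OPT - D (S i)) := by
        have hdiv : (OPT - D (S i)) / k ≤ D (S (i+1)) - D (S i) := by
          rw [div_le_iff₀ hk0]; linarith
        have hexp : (1 - 1/(k:ℝ)) * (OPT - D (S i)) =
            (OPT - D (S i)) - (OPT - D (S i)) / k := by
          field_simp
        linarith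
      have h7 : (1 - 1/(k:ℝ)) * (OPT - D (S i)) ≤
          (1 - 1/(k:ℝ)) * ((1 - 1/(k:ℝ))^i * OPT) :=
        mul_le_mul_of_nonneg_left hih hfac
      calc OPT - D (S (i+1)) ≤ (1 - 1/(k:ℝ)) * (OPT - D (S i)) := h6
        _ ≤ (1 - 1/(k:ℝ)) * ((1 - 1/(k:ℝ))^i * OPT) := h7
        _ = (1 - 1/(k:ℝ))^(i+1) * OPT := by ring
  have hkey := key k le_rfl
  have hpow : (1 - 1/(k:ℝ))^k ≤ 1 / Real.exp 1 := by
    have h1 : 1 - 1/(k:ℝ) ≤ Real.exp (-(1/(k:ℝ))) := by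
      have := Real.add_one_le_exp (-(1/(k:ℝ)))
      linarith
    have h2 : (1 - 1/(k:ℝ))^k ≤ (Real.exp (-(1/(k:ℝ))))^k :=
      pow_le_pow_left₀ hfac h1 k
    have h3 : (Real.exp (-(1/(k:ℝ))))^k = Real.exp (-1) := by
      rw [← Real.exp_nat_mul]
      congr 1
      field_simp
    rw [h3] at h2
    rw [Real.exp_neg, ← one_div] at h2
    exact h2
  have hfin : (1 - 1/(k:ℝ))^k * OPT ≤ (1 / Real.exp 1) * OPT :=
    mul_le_mul_of_nonneg_right hpow hOPT0
  have hring : (1 - 1 / Real.exp 1) * OPT = OPT - (1 / Real.exp 1) * OPT := by ring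
  linarith
end

section
/- Suppose M₂ i.i.d. RR sets are drawn and for a fixed vertex v with influence I_v ≥ I^k, the indicator variables xᵢ (xᵢ = 1 iff v ∈ Rᵢ) are i.i.d. Bernoulli with mean I_v/n. If M₂ ≥ n⌈Υ₁(ε, δ/n)⌉/((1+ε)I^k), then Pr[ (n/M₂)·Σᵢ xᵢ < (1−ε)I^k ] ≤ δ/(2n), where Υ₁(ε,δ/n) = 1 + (1+ε)·4(e−2)ln(2n/δ)/ε². -/
open MeasureTheory ProbabilityTheory
set_option maxHeartbeats 1000000

lemma key_ineq {u : ℝ} (hu0 : 0 < u) (hu1 : u ≤ 1) :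
    (1 - u) ^ 2 / 2 ≤ u * Real.log u - u + 1 := by
  set f : ℝ → ℝ := fun y => y * Real.log y - y + 1 - (1 - y) ^ 2 / 2 with hf
  have hderiv : ∀ y ∈ Set.Ioo u 1, HasDerivAt f (Real.log y + 1 - y) y := by
    intro y hy
    have hy0 : y ≠ 0 := ne_of_gt (lt_trans hu0 hy.1)
    have h1 : HasDerivAt (fun y : ℝ => y * Real.log y) (Real.log y + 1) y :=
      Real.hasDerivAt_mul_log hy0
    have h2 : HasDerivAt (fun y : ℝ => (1 - y) ^ 2 / 2) ((1 - y) * (-1)) y := by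
      have : HasDerivAt (fun y : ℝ => (1 - y)) (-1) y := by
        simpa using (hasDerivAt_id y).const_sub 1
      simpa [pow_two] using ((this.mul this).div_const 2)
    have := ((h1.sub (hasDerivAt_id y)).add_const 1).sub h2
    refine this.congr_deriv ?_
    ring
  have hcont : ContinuousOn f (Set.Icc u 1) := by
    apply ContinuousOn.sub
    · apply ContinuousOn.add
      · exact (Real.continuous_mul_log.continuousOn).sub continuousOn_id
      · exact continuousOn_const
    · fun_prop
  have hanti : AntitoneOn f (Set.Icc u 1) := by
    apply antitoneOn_of_deriv_nonpos (convex_Icc u 1) hcont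
    · rw [interior_Icc]
      exact fun y hy => (hderiv y hy).differentiableAt.differentiableWithinAt
    · rw [interior_Icc]
      intro y hy
      rw [(hderiv y hy).deriv]
      have := Real.log_le_sub_one_of_pos (lt_trans hu0 hy.1)
      linarith
  have := hanti ⟨le_rfl, hu1⟩ ⟨hu1, le_rfl⟩ hu1
  simp only [hf, Real.log_one, mul_zero] at this
  nlinarith [this]

lemma bern_facts {Ω : Type*} [MeasurableSpace Ω] (P : Measure Ω) [IsProbabilityMeasure P]
    (X : Ω → ℝ) (hm : Measurable X) (hval : ∀ ω, X ω = 0 ∨ X ω = 1)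
    (p : ℝ) (hp0 : 0 ≤ p) (hp : P {ω | X ω = 1} = ENNReal.ofReal p) (t : ℝ) :
    mgf X P t = 1 + (Real.exp t - 1) * p ∧
      Integrable (fun ω => Real.exp (t * X ω)) P := by
  have hs : MeasurableSet {ω | X ω = 1} := hm (measurableSet_singleton 1)
  have hXind : X = Set.indicator {ω | X ω = 1} (fun _ => (1:ℝ)) := by
    funext ω
    rcases hval ω with h | h
    · rw [h, Set.indicator_of_notMem]
      simp [Set.mem_setOf_eq, h]
    · rw [h, Set.indicator_of_mem]
      exact h
  have hXint : Integrable X P := by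
    rw [hXind]; exact (integrable_const (1:ℝ)).indicator hs
  have hXavg : ∫ ω, X ω ∂P = p := by
    rw [hXind]
    rw [integral_indicator_const (1:ℝ) hs, measureReal_def, hp, smul_eq_mul, mul_one,
      ENNReal.toReal_ofReal hp0]
  have hptw : (fun ω => Real.exp (t * X ω)) = fun ω => 1 + (Real.exp t - 1) * X ω := by
    funext ω
    rcases hval ω with h | h <;> rw [h] <;> simp
  constructor
  · rw [mgf, hptw, integral_add (integrable_const 1) (hXint.const_mul _),
      integral_const, integral_const_mul, hXavg]
    simp
  · rw [hptw]
    exact (integrable_const 1).add (hXint.const_mul _)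

/-- If `M₂` i.i.d. indicator variables `xᵢ` (membership of a fixed vertex `v` in the `i`-th
RR set) have mean `I_v/n` with `I_v ≥ I^k`, and
`M₂ ≥ n⌈Υ₁(ε, δ/n)⌉/((1+ε)I^k)`, then
`Pr[(n/M₂)·Σ xᵢ < (1−ε)I^k] ≤ δ/(2n)`. -/
theorem stmt13
    {Ω : Type*} [MeasurableSpace Ω] (P : Measure Ω) [IsProbabilityMeasure P]
    (n : ℕ) (hn : 1 ≤ n)
    (δ : ℝ) (hδ0 : 0 < δ) (hδ : δ ≤ 1 / 4)
    (ε : ℝ) (hε0 : 0 < ε) (hε : ε ≤ 1 / 3)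
    (Υ₁ : ℝ)
    (hΥ : Υ₁ = 1 + (1 + ε) * (4 * (Real.exp 1 - 2) * Real.log (2 * n / δ) / ε ^ 2))
    (Ik Iv : ℝ) (hIk : 0 < Ik) (hIv : Iv ≥ Ik) (hIvn : Iv ≤ n)
    (M₂ : ℕ) (hM₂ : (M₂ : ℝ) ≥ n * (⌈Υ₁⌉ : ℝ) / ((1 + ε) * Ik))
    (x : ℕ → Ω → ℝ) (hmeas : ∀ i, Measurable (x i))
    (hval : ∀ i ω, x i ω = 0 ∨ x i ω = 1)
    (hindep : iIndepFun x P)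
    (hident : ∀ i, P {ω | x i ω = 1} = ENNReal.ofReal (Iv / n)) :
    P {ω | (n : ℝ) / M₂ * (∑ i ∈ Finset.range M₂, x i ω) < (1 - ε) * Ik}
      ≤ ENNReal.ofReal (δ / (2 * n)) := by
  have hn' : (0:ℝ) < n := by exact_mod_cast hn
  have hIv0 : 0 < Iv := lt_of_lt_of_le hIk hIv
  set p : ℝ := Iv / n with hpdef
  have hp0 : 0 < p := div_pos hIv0 hn'
  have hp1 : p ≤ 1 := (div_le_one hn').mpr hIvn
  set L : ℝ := Real.log (2 * n / δ) with hLdef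
  have hXd : (0:ℝ) < 2 * n / δ := by positivity
  have hn1 : (1:ℝ) ≤ n := by exact_mod_cast hn
  have hXd1 : (1:ℝ) ≤ 2 * n / δ := by
    rw [le_div_iff₀ hδ0]; linarith [hn1]
  have hL0 : 0 ≤ L := Real.log_nonneg hXd1
  have he : (2.5:ℝ) ≤ Real.exp 1 := by
    have := Real.exp_one_gt_d9; norm_num at this ⊢; linarith
  have hε1 : ε < 1 := by linarith
  have h1ε : (0:ℝ) < 1 + ε := by linarith
  have hΥ1 : (1:ℝ) ≤ Υ₁ := by
    rw [hΥ]
    have h0 : 0 ≤ (1 + ε) * (4 * (Real.exp 1 - 2) * L / ε ^ 2) := by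
      apply mul_nonneg (by linarith)
      apply div_nonneg (mul_nonneg (by linarith) hL0) (by positivity)
    linarith
  have hceil : Υ₁ ≤ (⌈Υ₁⌉ : ℝ) := Int.le_ceil _
  have hceil1 : (1:ℝ) ≤ (⌈Υ₁⌉:ℝ) := le_trans hΥ1 hceil
  have hM₂0 : (0:ℝ) < M₂ := by
    refine lt_of_lt_of_le ?_ hM₂
    apply div_pos (mul_pos hn' (lt_of_lt_of_le one_pos hceil1)) (by positivity)
  have hM₂n : M₂ ≠ 0 := by
    intro h; rw [h] at hM₂0; norm_num at hM₂0
  -- parameters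
  set u : ℝ := (1 - ε) * Ik / Iv with hudef
  have hu0 : 0 < u := by
    apply div_pos (mul_pos (by linarith) hIk) hIv0
  have hu1 : u < 1 := by
    rw [hudef, div_lt_one hIv0]
    have := mul_pos hε0 hIk
    linarith
  set t : ℝ := Real.log u with htdef
  have ht0 : t < 0 := Real.log_neg hu0 hu1
  have het : Real.exp t = u := Real.exp_log hu0
  set a : ℝ := (1 - ε) * Ik * M₂ / n with hadef
  have hIvne : Iv ≠ 0 := ne_of_gt hIv0
  have hnne : (n:ℝ) ≠ 0 := ne_of_gt hn'
  have hup : u * p = (1 - ε) * Ik / n := by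
    rw [hudef, hpdef]; field_simp
  have hap : a = u * p * M₂ := by
    rw [hadef, hup]; ring
  -- sum random variable
  set S : Ω → ℝ := fun ω => ∑ i ∈ Finset.range M₂, x i ω with hSdef
  have hSmeas : Measurable S := Finset.measurable_sum _ (fun i _ => hmeas i)
  have hS0 : ∀ ω, 0 ≤ S ω := fun ω =>
    Finset.sum_nonneg fun i _ => by rcases hval i ω with h | h <;> rw [h] <;> norm_num
  have hSM : ∀ ω, S ω ≤ M₂ := by
    intro ω
    calc S ω ≤ ∑ _i ∈ Finset.range M₂, (1:ℝ) :=
          Finset.sum_le_sum fun i _ => by rcases hval i ω with h | h <;> rw [h] <;> norm_num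
      _ = M₂ := by simp
  have hint : Integrable (fun ω => Real.exp (t * S ω)) P := by
    refine (integrable_const (Real.exp (|t| * M₂))).mono'
      ((hSmeas.const_mul t).exp.aestronglyMeasurable) (ae_of_all _ fun ω => ?_)
    rw [Real.norm_eq_abs, Real.abs_exp]
    apply Real.exp_le_exp.mpr
    calc t * S ω ≤ |t| * S ω := mul_le_mul_of_nonneg_right (le_abs_self t) (hS0 ω)
      _ ≤ |t| * M₂ := mul_le_mul_of_nonneg_left (hSM ω) (abs_nonneg t)
  -- mgf of sum
  set b : ℝ := 1 + (Real.exp t - 1) * p with hbdef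
  have hbern := fun i => bern_facts P (x i) (hmeas i) (hval i) p hp0.le (hident i) t
  have hb0 : 0 < b := by
    have h1 : Real.exp t ≤ 1 := by rw [het]; exact hu1.le
    have h2 : Real.exp t - 1 ≤ 0 := by linarith
    have h3 := mul_le_mul_of_nonpos_left hp1 h2
    have h4 := Real.exp_pos t
    rw [hbdef]
    linarith
  have hmgfS : mgf S P t = b ^ M₂ := by
    have hfe : S = ∑ i ∈ Finset.range M₂, x i := by
      funext ω; simp [hSdef]
    rw [hfe, hindep.mgf_sum hmeas]
    rw [Finset.prod_congr rfl (fun i _ => (hbern i).1), Finset.prod_const,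
      Finset.card_range]
  -- Chernoff
  have hcher : (P {ω | S ω ≤ a}).toReal ≤ Real.exp (-t * a) * mgf S P t :=
    measure_le_le_exp_mul_mgf a ht0.le hint
  have hbexp : b ^ M₂ ≤ Real.exp (M₂ * ((Real.exp t - 1) * p)) := by
    calc b ^ M₂ ≤ (Real.exp ((Real.exp t - 1) * p)) ^ M₂ := by
          apply pow_le_pow_left₀ hb0.le
          have := Real.add_one_le_exp ((Real.exp t - 1) * p)
          linarith
      _ = Real.exp (M₂ * ((Real.exp t - 1) * p)) := by
          rw [← Real.exp_nat_mul]
  have hchain : (P {ω | S ω ≤ a}).toReal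
      ≤ Real.exp (-t * a + M₂ * ((Real.exp t - 1) * p)) := by
    calc (P {ω | S ω ≤ a}).toReal ≤ Real.exp (-t * a) * mgf S P t := hcher
      _ ≤ Real.exp (-t * a) * Real.exp (M₂ * ((Real.exp t - 1) * p)) := by
          rw [hmgfS]
          exact mul_le_mul_of_nonneg_left hbexp (Real.exp_pos _).le
      _ = Real.exp (-t * a + M₂ * ((Real.exp t - 1) * p)) := (Real.exp_add _ _).symm
  -- numeric bound on the exponent
  have hIkIv : Ik / Iv ≤ 1 := (div_le_one hIv0).mpr hIv
  have hξ : ε ≤ 1 - u := by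
    have : u ≤ 1 - ε := by
      rw [hudef, div_le_iff₀ hIv0]
      exact mul_le_mul_of_nonneg_left hIv (by linarith)
    linarith
  have hξp : ε * Ik / n ≤ (1 - u) * p := by
    have h1 : (1 - u) * p = (Iv - (1 - ε) * Ik) / n := by
      rw [hudef, hpdef]; field_simp
    rw [h1, div_le_div_iff_of_pos_right hn']
    linarith
  have hξ2p : ε ^ 2 * Ik / n ≤ (1 - u) ^ 2 * p := by
    have : ε ^ 2 * Ik / n = ε * (ε * Ik / n) := by ring
    rw [this, pow_two, mul_assoc]
    exact mul_le_mul hξ hξp (by positivity) (by linarith)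
  have hfinal : L ≤ (M₂:ℝ) * ((1 - u) ^ 2 * p) / 2 := by
    have step1 : ε ^ 2 * (⌈Υ₁⌉:ℝ) / (2 * (1 + ε)) ≤ (M₂:ℝ) * (ε ^ 2 * Ik / n) / 2 := by
      have heq : (n * (⌈Υ₁⌉:ℝ) / ((1 + ε) * Ik)) * (ε ^ 2 * Ik / n) / 2
          = ε ^ 2 * (⌈Υ₁⌉:ℝ) / (2 * (1 + ε)) := by
        field_simp
      rw [← heq]
      gcongr
    have step2 : L ≤ ε ^ 2 * Υ₁ / (2 * (1 + ε)) := by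
      have heq2 : ε ^ 2 * Υ₁ / (2 * (1 + ε))
          = ε ^ 2 / (2 * (1 + ε)) + 2 * (Real.exp 1 - 2) * L := by
        rw [hΥ]
        field_simp
        ring
      rw [heq2]
      have hpos : (0:ℝ) ≤ ε ^ 2 / (2 * (1 + ε)) := by positivity
      have hLL : 0 ≤ L * (2 * (Real.exp 1 - 2) - 1) :=
        mul_nonneg hL0 (by linarith)
      linarith [hpos, hLL]
    have step3 : ε ^ 2 * Υ₁ / (2 * (1 + ε)) ≤ ε ^ 2 * (⌈Υ₁⌉:ℝ) / (2 * (1 + ε)) := by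
      gcongr
    have step4 : (M₂:ℝ) * (ε ^ 2 * Ik / n) / 2 ≤ (M₂:ℝ) * ((1 - u) ^ 2 * p) / 2 := by
      gcongr
    linarith
  have hexp_le : -t * a + M₂ * ((Real.exp t - 1) * p) ≤ -L := by
    have hkey := key_ineq hu0 hu1.le
    have hMp : (0:ℝ) ≤ (M₂:ℝ) * p := by positivity
    have heq : -t * a + M₂ * ((Real.exp t - 1) * p)
        = -((M₂:ℝ) * p) * (u * Real.log u - u + 1) := by
      rw [het, hap, htdef]; ring
    rw [heq]
    have h2 : ((M₂:ℝ) * p) * ((1 - u) ^ 2 / 2) ≤ ((M₂:ℝ) * p) * (u * Real.log u - u + 1) :=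
      mul_le_mul_of_nonneg_left hkey hMp
    have h3 : (M₂:ℝ) * ((1 - u) ^ 2 * p) / 2 = ((M₂:ℝ) * p) * ((1 - u) ^ 2 / 2) := by ring
    rw [h3] at hfinal
    linarith
  have hexpL : Real.exp (-L) = δ / (2 * n) := by
    rw [Real.exp_neg, hLdef, Real.exp_log hXd, inv_div]
  -- event inclusion
  have hsub : {ω | (n : ℝ) / M₂ * (∑ i ∈ Finset.range M₂, x i ω) < (1 - ε) * Ik}
      ⊆ {ω | S ω ≤ a} := by
    intro ω hω
    simp only [Set.mem_setOf_eq] at hω ⊢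
    have hr : (0:ℝ) < (n:ℝ) / M₂ := by positivity
    have h1 : S ω < (1 - ε) * Ik / ((n:ℝ) / M₂) := by
      rw [lt_div_iff₀ hr, mul_comm]
      exact hω
    have h2 : (1 - ε) * Ik / ((n:ℝ) / M₂) = a := by
      rw [hadef]; field_simp
    linarith [h2 ▸ h1]
  calc P {ω | (n : ℝ) / M₂ * (∑ i ∈ Finset.range M₂, x i ω) < (1 - ε) * Ik}
      ≤ P {ω | S ω ≤ a} := measure_mono hsub
    _ = ENNReal.ofReal ((P {ω | S ω ≤ a}).toReal) :=
        (ENNReal.ofReal_toReal (measure_ne_top _ _)).symm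
    _ ≤ ENNReal.ofReal (δ / (2 * n)) := by
        apply ENNReal.ofReal_le_ofReal
        calc (P {ω | S ω ≤ a}).toReal
            ≤ Real.exp (-t * a + M₂ * ((Real.exp t - 1) * p)) := hchain
          _ ≤ Real.exp (-L) := Real.exp_le_exp.mpr hexp_le
          _ = δ / (2 * n) := hexpL
end

section
/- Suppose the following three events hold simultaneously: (1) D₁ᵏ/((1+ε)M₁) ≤ Iᵏ/n ≤ (D₁ᵏ+1)/((1−ε)M₁); (2) every vertex v with I_v ≥ Iᵏ satisfies D₂(v)/M₂ ≥ (1−ε)·Iᵏ/n; (3) every vertex v with I_v ≤ (1−2ε)·Iᵏ satisfies D₂(v)/M₂ ≤ I_v/n + ε·Iᵏ/n. Let T = ((1−ε)/(1+ε))·D₁ᵏ and M₂ = M₁. Then the set S = {v : D₂(v) ≥ T} contains every vertex with I_v ≥ Iᵏ, and every v ∈ S satisfies I_v ≥ n·T/M₂ − ε·Iᵏ. -/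
/-- Deterministic top-k guarantee: under events (1)–(3), with `T = ((1−ε)/(1+ε))·D₁ᵏ` and
`M₂ = M₁`, the returned set `S = {v : D₂(v) ≥ T}` contains every vertex with `I_v ≥ Iᵏ`,
and every `v ∈ S` has `I_v ≥ n·T/M₂ − ε·Iᵏ`. -/
theorem stmt16 {V : Type*} [Fintype V]
    (n : ℕ) (hn : 1 ≤ n)
    (Iv : V → ℝ) (hIv : ∀ v, 0 ≤ Iv v)
    (Ik : ℝ) (hIk : 0 < Ik)
    (ε : ℝ) (hε0 : 0 < ε) (hε : ε ≤ 1 / 3)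
    (D₁k : ℕ) (D₂ : V → ℕ) (M₁ M₂ : ℕ) (hM₁ : 0 < M₁) (hM : M₂ = M₁)
    (h1 : (D₁k : ℝ) / ((1 + ε) * M₁) ≤ Ik / n ∧ Ik / n ≤ ((D₁k : ℝ) + 1) / ((1 - ε) * M₁))
    (h2 : ∀ v, Iv v ≥ Ik → (D₂ v : ℝ) / M₂ ≥ (1 - ε) * Ik / n)
    (h3 : ∀ v, Iv v ≤ (1 - 2 * ε) * Ik → (D₂ v : ℝ) / M₂ ≤ Iv v / n + ε * Ik / n)
    (T : ℝ) (hT : T = ((1 - ε) / (1 + ε)) * D₁k)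
    (S : Finset V) (hS : ∀ v, v ∈ S ↔ (D₂ v : ℝ) ≥ T) :
    (∀ v, Iv v ≥ Ik → v ∈ S) ∧
    (∀ v ∈ S, Iv v ≥ n * T / M₂ - ε * Ik) := by
  subst hM
  have hM' : (0:ℝ) < M₂ := by exact_mod_cast hM₁
  have hn' : (0:ℝ) < n := by exact_mod_cast hn
  have hε1 : (0:ℝ) < 1 + ε := by linarith
  have h1' : (D₁k : ℝ) * n ≤ Ik * ((1 + ε) * M₂) := by
    have := h1.1
    rwa [div_le_div_iff₀ (by positivity) hn'] at this
  have hkey : (n:ℝ) * T ≤ (1 - ε) * Ik * M₂ := by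
    rw [hT, div_mul_eq_mul_div, mul_div_assoc', div_le_iff₀ hε1]
    nlinarith [h1']
  constructor
  · intro v hv
    rw [hS]
    have h2v := h2 v hv
    rw [ge_iff_le, div_le_div_iff₀ hn' hM'] at h2v
    rw [ge_iff_le]
    nlinarith [hkey, h2v, hn']
  · intro v hv
    rw [hS] at hv
    by_cases hc : Iv v ≤ (1 - 2 * ε) * Ik
    · have h3v := h3 v hc
      have hTv : T / M₂ ≤ Iv v / n + ε * Ik / n :=
        le_trans (by gcongr) h3v
      rw [← add_div, div_le_div_iff₀ hM' hn'] at hTv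
      have : (n:ℝ) * T / M₂ ≤ Iv v + ε * Ik := by
        rw [div_le_iff₀ hM']; nlinarith [hTv]
      linarith
    · push_neg at hc
      have : (n:ℝ) * T / M₂ ≤ (1 - ε) * Ik := by
        rw [div_le_iff₀ hM']; nlinarith [hkey]
      nlinarith [hc]
end

section
/- Suppose that for every k-set S, |D₂(S)/M₂ − I(S)/n| ≤ ε·I(S*_k)/n, and that the greedy output S_k satisfies D₂(S_k) ≥ (1−1/e)·max_{|S|=k} D₂(S). If moreover both failure events (the deviation event and the event I* < nD₁*/M₁) each have probability at most δ/3 and 2δ/3 respectively, then Pr[I(S_k) ≥ (1 − 1/e − (2 − 1/e)ε)·I(S*_k)] ≥ 1 − δ. -/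
open MeasureTheory ProbabilityTheory

/-- Union-bound guarantee for influence maximization: if on the good deviation event every
`k`-set `S` satisfies `|D₂(S)/M₂ − I(S)/n| ≤ ε·I(S*_k)/n`, the greedy output always
satisfies `D₂(S_k) ≥ (1−1/e)·max_{|S|=k} D₂(S)`, and the two failure events (deviation
failure, and `I* < nD₁*/M₁`) have probabilities at most `δ/3` and `2δ/3` respectively,
then `Pr[I(S_k) ≥ (1 − 1/e − (2 − 1/e)ε)·I(S*_k)] ≥ 1 − δ`. -/
theorem stmt19 {V : Type*} [Fintype V] [DecidableEq V]
    {Ω : Type*} [MeasurableSpace Ω] (P : Measure Ω) [IsProbabilityMeasure P]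
    (n : ℕ) (hn : 1 ≤ n)
    (I : Finset V → ℝ) (hI : ∀ S, 0 ≤ I S)
    (ε δ : ℝ) (hε : ε ∈ Set.Ioo (0:ℝ) 1) (hδ : δ ∈ Set.Ioo (0:ℝ) 1)
    (k : ℕ) (hk : 1 ≤ k)
    (Sstar : Finset V) (hSstar : Sstar.card = k)
    (hmax : ∀ S : Finset V, S.card = k → I S ≤ I Sstar)
    (M₁ M₂ : ℕ) (hM₂ : 0 < M₂)
    (D₂ : Ω → Finset V → ℕ)            -- random RR-set degrees
    (Sk : Ω → Finset V)                -- greedy output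
    (hSk : ∀ ω, (Sk ω).card = k)
    -- greedy guarantee (holds deterministically, by submodularity of the degree function)
    (hgreedy : ∀ ω, ∀ S : Finset V, S.card = k →
      (D₂ ω (Sk ω) : ℝ) ≥ (1 - 1 / Real.exp 1) * D₂ ω S)
    -- deviation failure event has probability at most δ/3
    (hdev : P {ω | ¬ ∀ S : Finset V, S.card = k →
        |(D₂ ω S : ℝ) / M₂ - I S / n| ≤ ε * I Sstar / n} ≤ ENNReal.ofReal (δ / 3))
    -- the failure event I* < n·D₁*/M₁ has probability at most 2δ/3
    (Istar : ℝ) (D₁star : ℕ) (M₁' : Ω → ℕ)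
    (hIstar : P {ω | Istar < n * (D₁star : ℝ) / (M₁' ω : ℝ)} ≤ ENNReal.ofReal (2 * δ / 3)) :
    P {ω | I (Sk ω) ≥ (1 - 1 / Real.exp 1 - (2 - 1 / Real.exp 1) * ε) * I Sstar}
      ≥ ENNReal.ofReal (1 - δ) := by
  obtain ⟨hε0, hε1⟩ := hε
  obtain ⟨hδ0, hδ1⟩ := hδ
  have hnpos : (0:ℝ) < n := by exact_mod_cast hn
  have hepos : (0:ℝ) < Real.exp 1 := Real.exp_pos 1
  have he1 : (1:ℝ) ≤ Real.exp 1 := by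
    have := Real.add_one_le_exp 1; linarith
  have hfac : (0:ℝ) ≤ 1 - 1 / Real.exp 1 := by
    have : 1 / Real.exp 1 ≤ 1 := by
      rw [div_le_one hepos]; exact he1
    linarith
  -- deterministic implication
  have key : ∀ ω, (∀ S : Finset V, S.card = k →
      |(D₂ ω S : ℝ) / M₂ - I S / n| ≤ ε * I Sstar / n) →
      I (Sk ω) ≥ (1 - 1 / Real.exp 1 - (2 - 1 / Real.exp 1) * ε) * I Sstar := by
    intro ω hdev'
    have h1 := hdev' (Sk ω) (hSk ω)
    have h2 := hdev' Sstar hSstar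
    have hA : I (Sk ω) / n ≥ (D₂ ω (Sk ω) : ℝ) / M₂ - ε * I Sstar / n := by
      have := abs_le.mp h1; linarith [this.1]
    have hB : (D₂ ω Sstar : ℝ) / M₂ ≥ I Sstar / n - ε * I Sstar / n := by
      have := abs_le.mp h2; linarith [this.2]
    have hg := hgreedy ω Sstar hSstar
    have hM₂pos : (0:ℝ) < M₂ := by exact_mod_cast hM₂
    have hC : (D₂ ω (Sk ω) : ℝ) / M₂ ≥ (1 - 1 / Real.exp 1) * ((D₂ ω Sstar : ℝ) / M₂) := by
      rw [ge_iff_le, ← mul_div_assoc, div_le_div_iff_of_pos_right hM₂pos]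
      exact hg
    have hD : (1 - 1 / Real.exp 1) * ((D₂ ω Sstar : ℝ) / M₂) ≥
        (1 - 1 / Real.exp 1) * (I Sstar / n - ε * I Sstar / n) :=
      mul_le_mul_of_nonneg_left hB hfac
    have hE : (1 - 1 / Real.exp 1 - (2 - 1 / Real.exp 1) * ε) * (I Sstar / n)
        = (1 - 1 / Real.exp 1) * (I Sstar / n - ε * I Sstar / n) - ε * I Sstar / n := by
      ring
    have hchain : I (Sk ω) / n ≥
        (1 - 1 / Real.exp 1 - (2 - 1 / Real.exp 1) * ε) * (I Sstar / n) := by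
      linarith [hA, hC, hD, hE]
    have h5 := mul_le_mul_of_nonneg_right hchain (le_of_lt hnpos)
    calc (1 - 1 / Real.exp 1 - (2 - 1 / Real.exp 1) * ε) * I Sstar
        = (1 - 1 / Real.exp 1 - (2 - 1 / Real.exp 1) * ε) * (I Sstar / n) * n := by
          field_simp
      _ ≤ I (Sk ω) / n * n := h5
      _ = I (Sk ω) := div_mul_cancel₀ _ (ne_of_gt hnpos)
  -- set inclusion of complements
  set G := {ω | I (Sk ω) ≥ (1 - 1 / Real.exp 1 - (2 - 1 / Real.exp 1) * ε) * I Sstar}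
  have hsub : Gᶜ ⊆ {ω | ¬ ∀ S : Finset V, S.card = k →
      |(D₂ ω S : ℝ) / M₂ - I S / n| ≤ ε * I Sstar / n} := by
    intro ω hω hcontra
    exact hω (key ω hcontra)
  have hcompl : P Gᶜ ≤ ENNReal.ofReal (δ / 3) := le_trans (measure_mono hsub) hdev
  have hunion : (1 : ENNReal) ≤ P G + P Gᶜ := by
    have := measure_union_le (μ := P) G Gᶜ
    rw [Set.union_compl_self, measure_univ] at this
    exact this
  have h1 : ENNReal.ofReal (1 - δ) + ENNReal.ofReal (δ / 3) ≤ P G + ENNReal.ofReal (δ / 3) := by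
    calc ENNReal.ofReal (1 - δ) + ENNReal.ofReal (δ / 3)
        = ENNReal.ofReal (1 - δ + δ / 3) := (ENNReal.ofReal_add (by linarith) (by linarith)).symm
      _ ≤ 1 := by
          rw [← ENNReal.ofReal_one]
          exact ENNReal.ofReal_le_ofReal (by linarith)
      _ ≤ P G + P Gᶜ := hunion
      _ ≤ P G + ENNReal.ofReal (δ / 3) := add_le_add_right hcompl _
  exact (ENNReal.add_le_add_iff_right ENNReal.ofReal_ne_top).mp h1
end
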